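/- arXiv:2201.07287 — 7 statements merged into one kernel-verified Lean document; each statement's English description precedes it below -/
import Mathlib

section
/- For every index i with 1 ≤ i ≤ 2^n, the size of the leaf set of the unique stopping tree rooted at variable node v_{1,i} in the polar code factor graph G_{2^n} equals the i-th entry of the vector T_{2^n} = T_2^{⊗n}, where T_2 = (1, 2)^T and ⊗n denotes the n-th Kronecker power. -/
/-- Neighbors (variable nodes `(column, row)`, 1-indexed) of the check node `c_{k,i}`
in the polar factor graph `G_{2^n}` of `F₂^{⊗n}`.  In stage `k`, rows are grouped in
blocks of size `2^(n-k+1)`; a check in the top half of its block has degree 3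
(with a slanted edge to row `i + 2^(n-k)`), one in the bottom half has degree 2. -/
def chkNbrs (n k i : ℕ) : Finset (ℕ × ℕ) :=
  if (i - 1) % 2 ^ (n - k + 1) < 2 ^ (n - k) then
    {(k, i), (k + 1, i), (k + 1, i + 2 ^ (n - k))}
  else
    {(k, i), (k + 1, i)}

/-- `c_{k,i}` is a check node of `G_{2^n}`. -/
def IsCheck (n k i : ℕ) : Prop := 1 ≤ k ∧ k ≤ n ∧ 1 ≤ i ∧ i ≤ 2 ^ n

/-- `v_{k,i}` is a variable node of `G_{2^n}`. -/
def IsVN (n k i : ℕ) : Prop := 1 ≤ k ∧ k ≤ n + 1 ∧ 1 ≤ i ∧ i ≤ 2 ^ n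

/-- A stopping set of `G_{2^n}`: a set of variable nodes such that every check node
adjacent to the set has at least two neighbors in the set. -/
def IsStoppingSet (n : ℕ) (ψ : Finset (ℕ × ℕ)) : Prop :=
  (∀ v ∈ ψ, IsVN n v.1 v.2) ∧
  ∀ k i, IsCheck n k i → (∃ v ∈ chkNbrs n k i, v ∈ ψ) →
    2 ≤ ((chkNbrs n k i) ∩ ψ).card

/-- The leaf set of a stopping set: its variable nodes in the rightmost column. -/
def leafSet (n : ℕ) (ψ : Finset (ℕ × ℕ)) : Finset (ℕ × ℕ) :=
  ψ.filter fun v => v.1 = n + 1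

/-- A stopping tree rooted at `v_{1,i}`: a stopping set whose only variable node in
the leftmost column is `v_{1,i}`. -/
def IsStoppingTree (n i : ℕ) (ψ : Finset (ℕ × ℕ)) : Prop :=
  IsStoppingSet n ψ ∧ ψ.filter (fun v => v.1 = 1) = {(1, i)}

/-- `Tvec n i` is the `i`-th (1-indexed) entry of `T₂^{⊗n}` where `T₂ = (1,2)ᵀ`. -/
def Tvec : ℕ → ℕ → ℕ
  | 0, _ => 1
  | n + 1, i => if i ≤ 2 ^ n then Tvec n i else 2 * Tvec n (i - 2 ^ n)


lemma lor_eq_right_iff {a b : ℕ} : a ||| b = b ↔ ∀ t, a.testBit t = true → b.testBit t = true := by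
  constructor
  · intro h t ht
    have := congrArg (fun x => x.testBit t) h
    simpa [Nat.testBit_or, ht] using this
  · intro h
    apply Nat.eq_of_testBit_eq
    intro t
    simp only [Nat.testBit_or]
    cases h' : a.testBit t
    · simp
    · simp [h t h']

lemma mod_two_pow_eq_iff {a b s : ℕ} :
    a % 2^s = b % 2^s ↔ ∀ t, t < s → a.testBit t = b.testBit t := by
  constructor
  · intro h t ht
    have := congrArg (fun x => x.testBit t) h
    simpa [Nat.testBit_mod_two_pow, ht] using this
  · intro h
    apply Nat.eq_of_testBit_eq
    intro t
    simp only [Nat.testBit_mod_two_pow]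
    by_cases ht : t < s
    · simp [ht, h t ht]
    · simp [ht]

lemma lt_half_iff (a s : ℕ) : a % 2^(s+1) < 2^s ↔ a.testBit s = false := by
  have hb : a.testBit s = (a % 2^(s+1)).testBit s := by
    simp [Nat.testBit_mod_two_pow]
  rw [hb]
  have h1 : a % 2^(s+1) < 2^(s+1) := Nat.mod_lt _ (by positivity)
  have h2 : a % 2^(s+1) / 2^s < 2 := by
    rw [Nat.div_lt_iff_lt_mul (by positivity)]
    calc a % 2^(s+1) < 2^(s+1) := h1
    _ = 2 * 2^s := by rw [pow_succ, Nat.mul_comm]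
  rw [Nat.testBit_eq_decide_div_mod_eq]
  constructor
  · intro h; simp [Nat.div_eq_of_lt h]
  · intro h
    simp only [decide_eq_false_iff_not] at h
    have h4 : a % 2^(s+1) / 2^s = 0 ∨ a % 2^(s+1) / 2^s = 1 := by
      generalize a % 2^(s+1) / 2^s = x at h2
      omega
    have h3 : a % 2^(s+1) / 2^s = 0 := by
      rcases h4 with h4 | h4
      · exact h4
      · exact absurd (by rw [h4]) h
    exact (Nat.div_eq_zero_iff.1 h3).resolve_left (by positivity)

lemma add_two_pow_eq_lor {a s : ℕ} (h : a.testBit s = false) : a + 2^s = a ||| 2^s := by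
  have hd : 2^(s+1) * (a / 2^(s+1)) + a % 2^(s+1) = a := Nat.div_add_mod a (2^(s+1))
  have hr : a % 2^(s+1) < 2^s := (lt_half_iff a s).2 h
  have h1 : 2^s + a % 2^(s+1) = 2^s ||| a % 2^(s+1) := by
    have := Nat.two_pow_add_eq_or_of_lt hr 1
    simpa [Nat.mul_one] using this
  have h2 : a % 2^(s+1) + 2^s < 2^(s+1) := by
    have : (2:ℕ)^(s+1) = 2^s * 2 := by rw [pow_succ]
    omega
  calc a + 2^s = 2^(s+1) * (a / 2^(s+1)) + (a % 2^(s+1) + 2^s) := by omega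
  _ = 2^(s+1) * (a / 2^(s+1)) ||| (a % 2^(s+1) + 2^s) := Nat.two_pow_add_eq_or_of_lt h2 _
  _ = 2^(s+1) * (a / 2^(s+1)) ||| (a % 2^(s+1) ||| 2^s) := by
      rw [show a % 2^(s+1) + 2^s = a % 2^(s+1) ||| 2^s from by rw [Nat.add_comm, h1, Nat.lor_comm]]
  _ = (2^(s+1) * (a / 2^(s+1)) ||| a % 2^(s+1)) ||| 2^s := by rw [Nat.lor_assoc]
  _ = a ||| 2^s := by rw [← Nat.two_pow_add_eq_or_of_lt (Nat.mod_lt _ (by positivity)) _, hd]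

section Graph

lemma chkNbrs_top {n k m : ℕ} (h : (m-1).testBit (n-k) = false) :
    chkNbrs n k m = {(k,m),(k+1,m),(k+1,m+2^(n-k))} := by
  rw [chkNbrs, if_pos ((lt_half_iff _ _).2 h)]

lemma chkNbrs_bot {n k m : ℕ} (h : (m-1).testBit (n-k) = true) :
    chkNbrs n k m = {(k,m),(k+1,m)} := by
  rw [chkNbrs, if_neg]
  rw [lt_half_iff, h]
  simp

lemma card_contra {S ψ : Finset (ℕ×ℕ)} {x : ℕ×ℕ} (h : 2 ≤ (S ∩ ψ).card)
    (hsub : ∀ u ∈ S, u ∈ ψ → u = x) : False := by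
  have hss : S ∩ ψ ⊆ {x} := by
    intro u hu
    rcases Finset.mem_inter.1 hu with ⟨hu1, hu2⟩
    simp [hsub u hu1 hu2]
  have := Finset.card_le_card hss
  simp only [Finset.card_singleton] at this
  omega

variable {n : ℕ} {ψ : Finset (ℕ × ℕ)}

lemma F1 (hS : IsStoppingSet n ψ) {k m : ℕ} (hk1 : 1 ≤ k) (hk2 : k ≤ n)
    (hm1 : 1 ≤ m) (hm2 : m ≤ 2^n) (hb : (m-1).testBit (n-k) = true)
    (hin : (k,m) ∈ ψ ∨ (k+1,m) ∈ ψ) : (k,m) ∈ ψ ∧ (k+1,m) ∈ ψ := by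
  have hset := chkNbrs_bot (n := n) (k := k) (m := m) hb
  have hwit : ∃ v ∈ chkNbrs n k m, v ∈ ψ := by
    rcases hin with h | h
    · exact ⟨(k,m), by simp [hset], h⟩
    · exact ⟨(k+1,m), by simp [hset], h⟩
  have hcard := hS.2 k m ⟨hk1, hk2, hm1, hm2⟩ hwit
  rw [hset] at hcard
  constructor
  · by_contra hc
    refine card_contra (x := (k+1,m)) hcard ?_
    intro u hu huψ
    simp only [Finset.mem_insert, Finset.mem_singleton] at hu
    rcases hu with rfl | rfl
    · exact absurd huψ hc
    · rfl
  · by_contra hc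
    refine card_contra (x := (k,m)) hcard ?_
    intro u hu huψ
    simp only [Finset.mem_insert, Finset.mem_singleton] at hu
    rcases hu with rfl | rfl
    · rfl
    · exact absurd huψ hc

lemma Ftop (hS : IsStoppingSet n ψ) {k m : ℕ} (hk1 : 1 ≤ k) (hk2 : k ≤ n)
    (hm1 : 1 ≤ m) (hm2 : m ≤ 2^n) (hb : (m-1).testBit (n-k) = false)
    (hin : (k,m) ∈ ψ ∨ (k+1,m) ∈ ψ ∨ (k+1,m+2^(n-k)) ∈ ψ) :
    ((k,m) ∈ ψ ∧ (k+1,m) ∈ ψ) ∨ ((k,m) ∈ ψ ∧ (k+1,m+2^(n-k)) ∈ ψ) ∨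
      ((k+1,m) ∈ ψ ∧ (k+1,m+2^(n-k)) ∈ ψ) := by
  have hset := chkNbrs_top (n := n) (k := k) (m := m) hb
  have hwit : ∃ v ∈ chkNbrs n k m, v ∈ ψ := by
    rcases hin with h | h | h
    · exact ⟨(k,m), by simp [hset], h⟩
    · exact ⟨(k+1,m), by simp [hset], h⟩
    · exact ⟨(k+1,m+2^(n-k)), by simp [hset], h⟩
  have hcard := hS.2 k m ⟨hk1, hk2, hm1, hm2⟩ hwit
  rw [hset] at hcard
  by_contra hc
  push_neg at hc
  obtain ⟨hc1, hc2, hc3⟩ := hc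
  by_cases h1 : (k,m) ∈ ψ
  · refine card_contra (x := (k,m)) hcard ?_
    intro u hu huψ
    simp only [Finset.mem_insert, Finset.mem_singleton] at hu
    rcases hu with rfl | rfl | rfl
    · rfl
    · exact absurd huψ (hc1 h1)
    · exact absurd huψ (hc2 h1)
  · by_cases h2 : (k+1,m) ∈ ψ
    · refine card_contra (x := (k+1,m)) hcard ?_
      intro u hu huψ
      simp only [Finset.mem_insert, Finset.mem_singleton] at hu
      rcases hu with rfl | rfl | rfl
      · exact absurd huψ h1
      · rfl
      · exact absurd huψ (hc3 h2)
    · refine card_contra (x := (k+1,m+2^(n-k))) hcard ?_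
      intro u hu huψ
      simp only [Finset.mem_insert, Finset.mem_singleton] at hu
      rcases hu with rfl | rfl | rfl
      · exact absurd huψ h1
      · exact absurd huψ h2
      · rfl

end Graph

def treeSet (n i : ℕ) : Finset (ℕ × ℕ) :=
  ((Finset.Icc 1 (n+1)) ×ˢ (Finset.Icc 1 (2^n))).filter fun p =>
    (p.2-1) % 2^(n+1-p.1) = (i-1) % 2^(n+1-p.1) ∧ (p.2-1) ||| (i-1) = i-1

lemma mem_treeSet {n i k j : ℕ} :
    (k, j) ∈ treeSet n i ↔ (1 ≤ k ∧ k ≤ n+1 ∧ 1 ≤ j ∧ j ≤ 2^n) ∧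
      (j-1) % 2^(n+1-k) = (i-1) % 2^(n+1-k) ∧ (j-1) ||| (i-1) = i-1 := by
  simp only [treeSet, Finset.mem_filter, Finset.mem_product, Finset.mem_Icc]
  tauto

/-- bit-level membership characterization -/
lemma mem_treeSet_bit {n i k j : ℕ} :
    (k, j) ∈ treeSet n i ↔ (1 ≤ k ∧ k ≤ n+1 ∧ 1 ≤ j ∧ j ≤ 2^n) ∧
      (∀ t, t < n+1-k → (j-1).testBit t = (i-1).testBit t) ∧
      (∀ t, (j-1).testBit t = true → (i-1).testBit t = true) := by
  rw [mem_treeSet, mod_two_pow_eq_iff, lor_eq_right_iff]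

lemma mem_treeSet_col1 {n i j : ℕ} (h1 : 1 ≤ i) (h2 : i ≤ 2^n) :
    (1, j) ∈ treeSet n i ↔ j = i := by
  rw [mem_treeSet]
  constructor
  · rintro ⟨⟨-, -, hj1, hj2⟩, hmod, -⟩
    have e : n + 1 - 1 = n := by omega
    rw [e] at hmod
    have l1 : j - 1 < 2^n := by omega
    have l2 : i - 1 < 2^n := by omega
    rw [Nat.mod_eq_of_lt l1, Nat.mod_eq_of_lt l2] at hmod
    omega
  · rintro rfl
    exact ⟨⟨le_refl 1, by omega, h1, h2⟩, rfl, Nat.or_self _⟩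

lemma ne_add_pow {k m s : ℕ} : (k, m) ≠ (k, m + 2^s) := by
  simp only [ne_eq, Prod.mk.injEq, not_and]
  intro _
  have h : 0 < 2^s := pow_pos (by norm_num) s
  generalize 2^s = B at h ⊢
  omega

lemma lor_two_pow_testBit (a s t : ℕ) :
    (a ||| 2^s).testBit t = (a.testBit t || decide (s = t)) := by
  simp [Nat.testBit_or, Nat.testBit_two_pow]

lemma treeSet_filter_col1 {n i : ℕ} (h1 : 1 ≤ i) (h2 : i ≤ 2^n) :
    (treeSet n i).filter (fun v => v.1 = 1) = {(1, i)} := by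
  ext ⟨k, j⟩
  simp only [Finset.mem_filter, Finset.mem_singleton, Prod.mk.injEq]
  constructor
  · rintro ⟨hmem, rfl⟩
    exact ⟨rfl, (mem_treeSet_col1 h1 h2).1 hmem⟩
  · rintro ⟨rfl, rfl⟩
    exact ⟨(mem_treeSet_col1 h1 h2).2 rfl, rfl⟩

lemma treeSet_isTree {n i : ℕ} (h1 : 1 ≤ i) (h2 : i ≤ 2^n) :
    IsStoppingTree n i (treeSet n i) := by
  refine ⟨⟨?_, ?_⟩, treeSet_filter_col1 h1 h2⟩
  · rintro ⟨k, j⟩ hv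
    obtain ⟨⟨a1, a2, a3, a4⟩, -⟩ := mem_treeSet.1 hv
    exact ⟨a1, a2, a3, a4⟩
  · rintro k m ⟨hk1, hk2, hm1, hm2⟩ ⟨v, hv, hvT⟩
    refine Finset.one_lt_card.2 ?_
    have hs1 : n + 1 - k = (n - k) + 1 := by omega
    have hs2 : n + 1 - (k + 1) = n - k := by omega
    have hsn : n - k < n := by omega
    have hpow : (2:ℕ)^(n-k) < 2^n := Nat.pow_lt_pow_right (by norm_num) hsn
    have hb : i - 1 < 2^n := by omega
    cases hbit : (m - 1).testBit (n - k) with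
    | true =>
      -- degree-2 check; both endpoints in the tree
      have hset := chkNbrs_bot (n := n) (k := k) (m := m) hbit
      rw [hset] at hv
      simp only [Finset.mem_insert, Finset.mem_singleton] at hv
      have hboth : (k, m) ∈ treeSet n i ∧ (k+1, m) ∈ treeSet n i := by
        rcases hv with rfl | rfl
        · obtain ⟨-, hmod, hsub⟩ := mem_treeSet_bit.1 hvT
          rw [hs1] at hmod
          refine ⟨hvT, mem_treeSet_bit.2 ⟨⟨by omega, by omega, hm1, hm2⟩, ?_, hsub⟩⟩
          intro t ht
          exact hmod t (by omega)
        · obtain ⟨-, hmod, hsub⟩ := mem_treeSet_bit.1 hvT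
          rw [hs2] at hmod
          refine ⟨mem_treeSet_bit.2 ⟨⟨by omega, by omega, hm1, hm2⟩, ?_, hsub⟩, hvT⟩
          intro t ht
          rw [hs1] at ht
          rcases Nat.lt_or_ge t (n - k) with h | h
          · exact hmod t h
          · have : t = n - k := by omega
            subst this
            rw [hbit, hsub _ hbit]
      refine ⟨(k, m), ?_, (k+1, m), ?_, by simp⟩
      · rw [hset]; exact Finset.mem_inter.2 ⟨by simp, hboth.1⟩
      · rw [hset]; exact Finset.mem_inter.2 ⟨by simp, hboth.2⟩
    | false =>
      have hset := chkNbrs_top (n := n) (k := k) (m := m) hbit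
      rw [hset] at hv
      simp only [Finset.mem_insert, Finset.mem_singleton] at hv
      have hrow : m + 2^(n-k) - 1 = (m - 1) ||| 2^(n-k) := by
        rw [← add_two_pow_eq_lor hbit]
        generalize 2^(n-k) = B
        omega
      have hrow' : ((m - 1) ||| 2^(n-k)) < 2^n := Nat.or_lt_two_pow (by omega) hpow
      have hbound : m + 2^(n-k) - 1 < 2^n := by rw [hrow]; exact hrow'
      have hBpos : 0 < 2^(n-k) := pow_pos (by norm_num) _
      have hb2 : m + 2^(n-k) ≤ 2^n ∧ 1 ≤ m + 2^(n-k) := by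
        generalize 2^(n-k) = B at hbound hBpos
        omega
      rcases hv with rfl | rfl | rfl
      · -- witness (k, m): then i's bit is false, straight child in tree
        obtain ⟨-, hmod, hsub⟩ := mem_treeSet_bit.1 hvT
        rw [hs1] at hmod
        have hchild : (k+1, m) ∈ treeSet n i := by
          refine mem_treeSet_bit.2 ⟨⟨by omega, by omega, hm1, hm2⟩, ?_, hsub⟩
          intro t ht
          rw [hs2] at ht
          exact hmod t (by omega)
        refine ⟨(k, m), ?_, (k+1, m), ?_, by simp⟩
        · rw [hset]; exact Finset.mem_inter.2 ⟨by simp, hvT⟩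
        · rw [hset]; exact Finset.mem_inter.2 ⟨by simp, hchild⟩
      · -- witness (k+1, m)
        obtain ⟨⟨-, -, -, -⟩, hmod, hsub⟩ := mem_treeSet_bit.1 hvT
        rw [hs2] at hmod
        cases hbb : (i - 1).testBit (n - k) with
        | false =>
          have hpar : (k, m) ∈ treeSet n i := by
            refine mem_treeSet_bit.2 ⟨⟨by omega, by omega, hm1, hm2⟩, ?_, hsub⟩
            intro t ht
            rw [hs1] at ht
            rcases Nat.lt_or_ge t (n - k) with h | h
            · exact hmod t h
            · have : t = n - k := by omega
              subst this
              rw [hbit, hbb]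
          refine ⟨(k, m), ?_, (k+1, m), ?_, by simp⟩
          · rw [hset]; exact Finset.mem_inter.2 ⟨by simp, hpar⟩
          · rw [hset]; exact Finset.mem_inter.2 ⟨by simp, hvT⟩
        | true =>
          have hsl : (k+1, m + 2^(n-k)) ∈ treeSet n i := by
            refine mem_treeSet_bit.2 ⟨⟨by omega, by omega, hb2.2, hb2.1⟩, ?_, ?_⟩
            · intro t ht
              rw [hs2] at ht
              rw [hrow, lor_two_pow_testBit]
              have : ¬ (n - k = t) := by omega
              simp only [this, decide_false, Bool.or_false]
              exact hmod t ht
            · intro t ht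
              rw [hrow, lor_two_pow_testBit] at ht
              rcases Bool.or_eq_true_iff.1 ht with h | h
              · exact hsub t h
              · have : n - k = t := of_decide_eq_true h
                subst this
                exact hbb
          refine ⟨(k+1, m), ?_, (k+1, m + 2^(n-k)), ?_, ne_add_pow⟩
          · rw [hset]; exact Finset.mem_inter.2 ⟨by simp, hvT⟩
          · rw [hset]; exact Finset.mem_inter.2 ⟨by simp, hsl⟩
      · -- witness (k+1, m + 2^(n-k))
        obtain ⟨⟨-, -, -, -⟩, hmod, hsub⟩ := mem_treeSet_bit.1 hvT
        rw [hs2, hrow] at hmod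
        rw [hrow] at hsub
        have hstr : (k+1, m) ∈ treeSet n i := by
          refine mem_treeSet_bit.2 ⟨⟨by omega, by omega, hm1, hm2⟩, ?_, ?_⟩
          · intro t ht
            rw [hs2] at ht
            have := hmod t ht
            rw [lor_two_pow_testBit] at this
            have hne : ¬ (n - k = t) := by omega
            simpa [hne] using this
          · intro t ht
            refine hsub t ?_
            rw [lor_two_pow_testBit, ht]
            simp
        refine ⟨(k+1, m), ?_, (k+1, m + 2^(n-k)), ?_, ne_add_pow⟩
        · rw [hset]; exact Finset.mem_inter.2 ⟨by simp, hstr⟩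
        · rw [hset]; exact Finset.mem_inter.2 ⟨by simp, hvT⟩

lemma col_eq {n i : ℕ} (h1 : 1 ≤ i) (h2 : i ≤ 2^n) {ψ : Finset (ℕ × ℕ)}
    (hT : IsStoppingTree n i ψ) :
    ∀ d, d ≤ n → ∀ j, ((d+1, j) ∈ ψ ↔ (d+1, j) ∈ treeSet n i) := by
  obtain ⟨hS, hroot⟩ := hT
  intro d
  induction d with
  | zero =>
    intro _ j
    rw [mem_treeSet_col1 h1 h2]
    constructor
    · intro h
      have hf : ((1:ℕ), j) ∈ ψ.filter (fun v => v.1 = 1) := Finset.mem_filter.2 ⟨h, rfl⟩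
      rw [hroot] at hf
      have := Finset.mem_singleton.1 hf
      exact (Prod.ext_iff.1 this).2
    · intro h
      have hx : ((1:ℕ), i) ∈ ψ.filter (fun v => v.1 = 1) := by
        rw [hroot]; exact Finset.mem_singleton_self _
      rw [h]
      exact (Finset.mem_filter.1 hx).1
  | succ d ih =>
    intro hd j
    have ih' := ih (by omega)
    have e1 : n + 1 - (d+1) = (n - (d+1)) + 1 := by omega
    have e2 : n + 1 - (d+1+1) = n - (d+1) := by omega
    have hsn : n - (d+1) < n := by omega
    have hpow : (2:ℕ)^(n-(d+1)) < 2^n := Nat.pow_lt_pow_right (by norm_num) hsn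
    have hBpos : 0 < (2:ℕ)^(n-(d+1)) := pow_pos (by norm_num) _
    have hb : i - 1 < 2^n := by omega
    constructor
    · -- ψ ⊆ treeSet at column d+2
      intro hmem
      obtain ⟨-, -, hj1, hj2⟩ := hS.1 _ hmem
      cases hbit : (j-1).testBit (n-(d+1)) with
      | true =>
        have hF := F1 hS (k := d+1) (by omega) (by omega) hj1 hj2 hbit (Or.inr hmem)
        obtain ⟨-, hmod, hsub⟩ := mem_treeSet_bit.1 ((ih' j).1 hF.1)
        rw [e1] at hmod
        refine mem_treeSet_bit.2 ⟨⟨by omega, by omega, hj1, hj2⟩, ?_, hsub⟩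
        intro t ht
        rw [e2] at ht
        exact hmod t (by omega)
      | false =>
        have hF := Ftop hS (k := d+1) (by omega) (by omega) hj1 hj2 hbit
          (Or.inr (Or.inl hmem))
        have hstep : (d+1, j) ∈ ψ ∨ (d+1+1, j + 2^(n-(d+1))) ∈ ψ := by
          rcases hF with ⟨h, -⟩ | ⟨h, -⟩ | ⟨-, h⟩
          · exact Or.inl h
          · exact Or.inl h
          · exact Or.inr h
        rcases hstep with h | hsl
        · obtain ⟨-, hmod, hsub⟩ := mem_treeSet_bit.1 ((ih' j).1 h)
          rw [e1] at hmod
          refine mem_treeSet_bit.2 ⟨⟨by omega, by omega, hj1, hj2⟩, ?_, hsub⟩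
          intro t ht
          rw [e2] at ht
          exact hmod t (by omega)
        · obtain ⟨-, -, hj1', hj2'⟩ := hS.1 _ hsl
          have hrow : j + 2^(n-(d+1)) - 1 = (j - 1) ||| 2^(n-(d+1)) := by
            rw [← add_two_pow_eq_lor hbit]
            generalize 2^(n-(d+1)) = B
            omega
          have hbit' : (j + 2^(n-(d+1)) - 1).testBit (n-(d+1)) = true := by
            rw [hrow, lor_two_pow_testBit]
            simp
          have hF1 := F1 hS (k := d+1) (by omega) (by omega) hj1' hj2' hbit' (Or.inr hsl)
          obtain ⟨-, hmod, hsub⟩ := mem_treeSet_bit.1 ((ih' _).1 hF1.1)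
          rw [e1, hrow] at hmod
          rw [hrow] at hsub
          refine mem_treeSet_bit.2 ⟨⟨by omega, by omega, hj1, hj2⟩, ?_, ?_⟩
          · intro t ht
            rw [e2] at ht
            have := hmod t (by omega)
            rw [lor_two_pow_testBit] at this
            have hne : ¬ (n - (d+1) = t) := by omega
            simpa [hne] using this
          · intro t ht
            refine hsub t ?_
            rw [lor_two_pow_testBit, ht]
            simp
    · -- treeSet ⊆ ψ at column d+2
      intro hmem
      obtain ⟨⟨-, -, hj1, hj2⟩, hmod, hsub⟩ := mem_treeSet_bit.1 hmem
      rw [e2] at hmod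
      cases hbb : (i-1).testBit (n-(d+1)) with
      | false =>
        have habit : (j-1).testBit (n-(d+1)) = false := by
          cases h : (j-1).testBit (n-(d+1)) with
          | false => rfl
          | true =>
            have := hsub _ h
            rw [hbb] at this
            exact absurd this (by simp)
        have hpar : (d+1, j) ∈ ψ := by
          refine (ih' j).2 (mem_treeSet_bit.2 ⟨⟨by omega, by omega, hj1, hj2⟩, ?_, hsub⟩)
          intro t ht
          rw [e1] at ht
          rcases Nat.lt_or_ge t (n - (d+1)) with h | h
          · exact hmod t h
          · have : t = n - (d+1) := by omega
            subst this
            rw [habit, hbb]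
        have hF := Ftop hS (k := d+1) (by omega) (by omega) hj1 hj2 habit (Or.inl hpar)
        rcases hF with ⟨-, h⟩ | ⟨-, hsl⟩ | ⟨h, -⟩
        · exact h
        · -- slant in ψ forces contradiction with hbb
          exfalso
          obtain ⟨-, -, hj1', hj2'⟩ := hS.1 _ hsl
          have hrow : j + 2^(n-(d+1)) - 1 = (j - 1) ||| 2^(n-(d+1)) := by
            rw [← add_two_pow_eq_lor habit]
            generalize 2^(n-(d+1)) = B
            omega
          have hbit' : (j + 2^(n-(d+1)) - 1).testBit (n-(d+1)) = true := by
            rw [hrow, lor_two_pow_testBit]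
            simp
          have hF1 := F1 hS (k := d+1) (by omega) (by omega) hj1' hj2' hbit' (Or.inr hsl)
          obtain ⟨-, hmod', -⟩ := mem_treeSet_bit.1 ((ih' _).1 hF1.1)
          rw [e1] at hmod'
          have := hmod' (n - (d+1)) (by omega)
          rw [hrow, lor_two_pow_testBit, hbb] at this
          simp at this
        · exact h
      | true =>
        cases habit : (j-1).testBit (n-(d+1)) with
        | true =>
          have hpar : (d+1, j) ∈ ψ := by
            refine (ih' j).2 (mem_treeSet_bit.2 ⟨⟨by omega, by omega, hj1, hj2⟩, ?_, hsub⟩)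
            intro t ht
            rw [e1] at ht
            rcases Nat.lt_or_ge t (n - (d+1)) with h | h
            · exact hmod t h
            · have : t = n - (d+1) := by omega
              subst this
              rw [habit, hbb]
          exact (F1 hS (k := d+1) (by omega) (by omega) hj1 hj2 habit (Or.inl hpar)).2
        | false =>
          have hrow : j + 2^(n-(d+1)) - 1 = (j - 1) ||| 2^(n-(d+1)) := by
            rw [← add_two_pow_eq_lor habit]
            generalize 2^(n-(d+1)) = B
            omega
          have hlt : ((j - 1) ||| 2^(n-(d+1))) < 2^n := Nat.or_lt_two_pow (by omega) hpow
          have hj2' : j + 2^(n-(d+1)) ≤ 2^n := by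
            rw [← hrow] at hlt
            generalize 2^(n-(d+1)) = B at hlt hBpos
            omega
          have hj1' : 1 ≤ j + 2^(n-(d+1)) := le_trans hj1 (Nat.le_add_right _ _)
          have hbit' : (j + 2^(n-(d+1)) - 1).testBit (n-(d+1)) = true := by
            rw [hrow, lor_two_pow_testBit]
            simp
          have hsl_tree : (d+1, j + 2^(n-(d+1))) ∈ treeSet n i := by
            refine mem_treeSet_bit.2 ⟨⟨by omega, by omega, hj1', hj2'⟩, ?_, ?_⟩
            · intro t ht
              rw [e1] at ht
              rw [hrow, lor_two_pow_testBit]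
              rcases Nat.lt_or_ge t (n - (d+1)) with h | h
              · have hne : ¬ (n - (d+1) = t) := by omega
                simp only [hne, decide_false, Bool.or_false]
                exact hmod t h
              · have : t = n - (d+1) := by omega
                subst this
                simp [habit, hbb]
            · intro t ht
              rw [hrow, lor_two_pow_testBit] at ht
              rcases Bool.or_eq_true_iff.1 ht with h | h
              · exact hsub t h
              · have : n - (d+1) = t := of_decide_eq_true h
                subst this
                exact hbb
          have hslψ : (d+1, j + 2^(n-(d+1))) ∈ ψ := (ih' _).2 hsl_tree
          have hF1 := F1 hS (k := d+1) (by omega) (by omega) hj1' hj2' hbit' (Or.inl hslψ)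
          have hF := Ftop hS (k := d+1) (by omega) (by omega) hj1 hj2 habit
            (Or.inr (Or.inr hF1.2))
          have hcontra : (d+1, j) ∈ ψ → False := by
            intro h
            obtain ⟨-, hmod', -⟩ := mem_treeSet_bit.1 ((ih' j).1 h)
            rw [e1] at hmod'
            have := hmod' (n - (d+1)) (by omega)
            rw [habit, hbb] at this
            exact absurd this (by simp)
          rcases hF with ⟨h, -⟩ | ⟨h, -⟩ | ⟨h, -⟩
          · exact absurd h (fun hh => hcontra hh)
          · exact absurd h (fun hh => hcontra hh)
          · exact h

lemma treeSet_unique {n i : ℕ} (h1 : 1 ≤ i) (h2 : i ≤ 2^n) {ψ : Finset (ℕ × ℕ)}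
    (hT : IsStoppingTree n i ψ) : ψ = treeSet n i := by
  ext ⟨k, j⟩
  constructor
  · intro h
    obtain ⟨hk1, hk2, -, -⟩ := hT.1.1 _ h
    obtain ⟨d, rfl⟩ : ∃ d, k = d + 1 := ⟨k-1, by omega⟩
    exact (col_eq h1 h2 hT d (by omega) j).1 h
  · intro h
    obtain ⟨⟨hk1, hk2, -, -⟩, -⟩ := mem_treeSet.1 h
    obtain ⟨d, rfl⟩ : ∃ d, k = d + 1 := ⟨k-1, by omega⟩
    exact (col_eq h1 h2 hT d (by omega) j).2 h

lemma bit_lt_of_lt {a t m : ℕ} (ha : a < 2^m) (h : a.testBit t = true) : t < m := by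
  by_contra hc
  have h1 := Nat.ge_two_pow_of_testBit h
  have h2 : (2:ℕ)^m ≤ 2^t := Nat.pow_le_pow_right (by norm_num) (by omega)
  omega

lemma lor_iff_low {a b' m : ℕ} (ha : a < 2^m) (hb' : b' < 2^m) :
    (a ||| (b' + 2^m) = b' + 2^m ↔ a ||| b' = b') := by
  have hbeq : b' + 2^m = b' ||| 2^m := add_two_pow_eq_lor (Nat.testBit_lt_two_pow hb')
  rw [hbeq, lor_eq_right_iff, lor_eq_right_iff]
  constructor
  · intro h t ht
    have h2 := h t ht
    rw [lor_two_pow_testBit] at h2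
    have hne : ¬ (m = t) := by have := bit_lt_of_lt ha ht; omega
    simpa [hne] using h2
  · intro h t ht
    rw [lor_two_pow_testBit, h t ht]
    simp

lemma lor_iff_high {c b' m : ℕ} (hc : c < 2^m) (hb' : b' < 2^m) :
    ((c + 2^m) ||| (b' + 2^m) = b' + 2^m ↔ c ||| b' = b') := by
  have hbeq : b' + 2^m = b' ||| 2^m := add_two_pow_eq_lor (Nat.testBit_lt_two_pow hb')
  have hceq : c + 2^m = c ||| 2^m := add_two_pow_eq_lor (Nat.testBit_lt_two_pow hc)
  rw [hbeq, hceq, lor_eq_right_iff, lor_eq_right_iff]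
  constructor
  · intro h t ht
    have h2 : (c ||| 2^m).testBit t = true := by
      rw [lor_two_pow_testBit, ht]; simp
    have h3 := h t h2
    rw [lor_two_pow_testBit] at h3
    have hne : ¬ (m = t) := by have := bit_lt_of_lt hc ht; omega
    simpa [hne] using h3
  · intro h t ht
    rw [lor_two_pow_testBit] at ht ⊢
    rcases Bool.or_eq_true_iff.1 ht with h' | h'
    · rw [h t h']; simp
    · rw [h']; simp

lemma count_submask : ∀ n b : ℕ, b < 2^n →
    ((Finset.range (2^n)).filter (fun a => a ||| b = b)).card = Tvec n (b+1) := by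
  intro n
  induction n with
  | zero =>
    intro b hb
    have hb0 : b = 0 := by simpa using hb
    subst hb0
    decide
  | succ n ih =>
    intro b hb
    have h2p : (2:ℕ)^(n+1) = 2^n + 2^n := by rw [pow_succ]; ring
    rcases Nat.lt_or_ge b (2^n) with hblt | hbge
    · -- top half: same as level n
      have hfe : (Finset.range (2^(n+1))).filter (fun a => a ||| b = b) =
          (Finset.range (2^n)).filter (fun a => a ||| b = b) := by
        ext a
        simp only [Finset.mem_filter, Finset.mem_range]
        constructor
        · rintro ⟨h1, h2⟩
          have : a ≤ b := Nat.le_of_testBit (lor_eq_right_iff.1 h2)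
          exact ⟨by omega, h2⟩
        · rintro ⟨h1, h2⟩
          exact ⟨by omega, h2⟩
      rw [hfe, ih b hblt]
      have : b + 1 ≤ 2^n := by omega
      simp [Tvec, this]
    · -- bottom half
      obtain ⟨b', rfl⟩ : ∃ b', b = b' + 2^n := ⟨b - 2^n, by omega⟩
      have hb' : b' < 2^n := by omega
      have hA : ((Finset.range (2^(n+1))).filter (fun a => a ||| (b' + 2^n) = b' + 2^n)).filter
            (fun a => a < 2^n) =
          (Finset.range (2^n)).filter (fun a => a ||| b' = b') := by
        ext a
        simp only [Finset.mem_filter, Finset.mem_range]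
        constructor
        · rintro ⟨⟨h1, h2⟩, h3⟩
          exact ⟨h3, (lor_iff_low h3 hb').1 h2⟩
        · rintro ⟨h1, h2⟩
          exact ⟨⟨by omega, (lor_iff_low h1 hb').2 h2⟩, h1⟩
      have hB : ((Finset.range (2^(n+1))).filter (fun a => a ||| (b' + 2^n) = b' + 2^n)).filter
            (fun a => ¬ a < 2^n) =
          ((Finset.range (2^n)).filter (fun a => a ||| b' = b')).image (fun c => c + 2^n) := by
        ext a
        simp only [Finset.mem_filter, Finset.mem_range, Finset.mem_image]
        constructor
        · rintro ⟨⟨h1, h2⟩, h3⟩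
          refine ⟨a - 2^n, ⟨by omega, ?_⟩, by omega⟩
          have he : a = (a - 2^n) + 2^n := by omega
          rw [he] at h2
          exact (lor_iff_high (by omega) hb').1 h2
        · rintro ⟨c, ⟨hc1, hc2⟩, rfl⟩
          refine ⟨⟨by omega, (lor_iff_high hc1 hb').2 hc2⟩, by omega⟩
      have hcards := Finset.card_filter_add_card_filter_not
        (s := (Finset.range (2^(n+1))).filter (fun a => a ||| (b' + 2^n) = b' + 2^n))
        (p := fun a => a < 2^n)
      rw [hA, hB] at hcards
      rw [Finset.card_image_of_injective _ (add_left_injective (2^n))] at hcards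
      rw [ih b' hb'] at hcards
      have hTv : Tvec (n+1) (b' + 2^n + 1) = 2 * Tvec n (b' + 1) := by
        have hgt : ¬ (b' + 2^n + 1 ≤ 2^n) := by omega
        have he : b' + 2^n + 1 - 2^n = b' + 1 := by omega
        simp [Tvec, hgt, he]
      omega

lemma leaf_card {n i : ℕ} (h1 : 1 ≤ i) (h2 : i ≤ 2^n) :
    (leafSet n (treeSet n i)).card = Tvec n i := by
  have hEq : leafSet n (treeSet n i) =
      ((Finset.range (2^n)).filter (fun a => a ||| (i-1) = i-1)).image (fun a => (n+1, a+1)) := by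
    ext ⟨k, j⟩
    simp only [leafSet, Finset.mem_filter, Finset.mem_image, Finset.mem_range, mem_treeSet]
    constructor
    · rintro ⟨⟨⟨-, -, hj1, hj2⟩, -, hsub⟩, hk⟩
      refine ⟨j - 1, ⟨by omega, hsub⟩, ?_⟩
      have : j - 1 + 1 = j := by omega
      rw [this]
      exact Prod.ext_iff.2 ⟨hk.symm, rfl⟩
    · rintro ⟨a, ⟨ha, hsub⟩, heq⟩
      obtain ⟨hk, hj⟩ := Prod.ext_iff.1 heq
      simp only at hk hj
      refine ⟨⟨⟨by omega, by omega, by omega, by omega⟩, ?_, ?_⟩, hk.symm⟩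
      · rw [← hk]
        simp [Nat.mod_one]
      · rw [← hj]
        simpa using hsub
  rw [hEq, Finset.card_image_of_injective, count_submask n (i-1) (by omega)]
  · congr 1
    omega
  · intro x y hxy
    simpa using (Prod.ext_iff.1 hxy).2

/-- For every `1 ≤ i ≤ 2^n`, there is a unique stopping tree rooted at `v_{1,i}` in
`G_{2^n}`, and the size of its leaf set equals the `i`-th entry of `T₂^{⊗n}`. -/
theorem leafSet_card_stoppingTree (n i : ℕ) (h1 : 1 ≤ i) (h2 : i ≤ 2 ^ n) :
    (∃! ψ : Finset (ℕ × ℕ), IsStoppingTree n i ψ) ∧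
    ∀ ψ : Finset (ℕ × ℕ), IsStoppingTree n i ψ → (leafSet n ψ).card = Tvec n i := by
  constructor
  · exact ⟨treeSet n i, treeSet_isTree h1 h2, fun ψ hψ => treeSet_unique h1 h2 hψ⟩
  · intro ψ hψ
    rw [treeSet_unique h1 h2 hψ]
    exact leaf_card h1 h2
end

section
/- Let Ñ = 2^n and let F̃ be a frozen index set with [Ñ − μ + 1, Ñ] ⊆ F̃. Then no stopping set of the factor graph G_{Ñ} that avoids all frozen variable nodes {v_{1,i} : i ∈ F̃} contains any variable node v_{(n+1),i} with Ñ − μ + 1 ≤ i ≤ Ñ. That is, stopping sets avoiding the frozen leftmost-column nodes contain no rightmost-column nodes from the bottom μ rows. -/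
lemma key_prop (n μ : ℕ) (F : Finset ℕ)
    (hbot : Finset.Icc (2 ^ n - μ + 1) (2 ^ n) ⊆ F)
    (ψ : Finset (ℕ × ℕ)) (hψ : IsStoppingSet n ψ)
    (havoid : ∀ j ∈ F, (1, j) ∉ ψ) :
    ∀ m k i, k * (2 ^ n + 1) + (2 ^ n - i) ≤ m → (k + 1, i) ∈ ψ →
      2 ^ n - μ + 1 ≤ i → False := by
  intro m
  induction m using Nat.strong_induction_on with
  | _ m ih =>
    intro k i hm hmem hL
    obtain ⟨hvn, hchk⟩ := hψ
    obtain ⟨_, hk1, hi1, hi2⟩ := hvn _ hmem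
    match k with
    | 0 =>
      exact havoid i (hbot (Finset.mem_Icc.mpr ⟨hL, hi2⟩)) hmem
    | k + 1 =>
      simp only at hk1 hi1 hi2
      have hkn : k + 1 ≤ n := by omega
      have hcheck : IsCheck n (k + 1) i := ⟨by omega, hkn, hi1, hi2⟩
      have hnbr : ((k + 1) + 1, i) ∈ chkNbrs n (k + 1) i := by
        unfold chkNbrs; split <;> simp
      have hcard := hchk (k + 1) i hcheck ⟨_, hnbr, hmem⟩
      have hA : (k + 1) * (2 ^ n + 1) = k * (2 ^ n + 1) + (2 ^ n + 1) := by ring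
      by_cases hmid : ((k + 1), i) ∈ ψ
      · exact ih (k * (2 ^ n + 1) + (2 ^ n - i)) (by omega) k i le_rfl hmid hL
      · -- slant case: the check must use the slanted edge
        unfold chkNbrs at hcard
        split at hcard
        · by_cases hsl : ((k + 1) + 1, i + 2 ^ (n - (k + 1))) ∈ ψ
          · obtain ⟨_, _, _, hsl2⟩ := hvn _ hsl
            simp only at hsl2
            have hpow : 1 ≤ 2 ^ (n - (k + 1)) := Nat.one_le_two_pow
            refine ih ((k + 1) * (2 ^ n + 1) + (2 ^ n - (i + 2 ^ (n - (k + 1)))))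
              (by omega) (k + 1) (i + 2 ^ (n - (k + 1))) le_rfl hsl (by omega)
          · have hsub : ({(k + 1, i), ((k + 1) + 1, i), ((k + 1) + 1, i + 2 ^ (n - (k + 1)))} : Finset (ℕ × ℕ)) ∩ ψ ⊆ {((k + 1) + 1, i)} := by
              intro x hx
              simp only [Finset.mem_inter, Finset.mem_insert, Finset.mem_singleton] at hx ⊢
              rcases hx with ⟨h1 | h1 | h1, h2⟩ <;> subst h1 <;>
                first | rfl | exact absurd h2 hmid | exact absurd h2 hsl
            have := Finset.card_le_card hsub
            simp at this; omega
        · have hsub : ({(k + 1, i), ((k + 1) + 1, i)} : Finset (ℕ × ℕ)) ∩ ψ ⊆ {((k + 1) + 1, i)} := by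
            intro x hx
            simp only [Finset.mem_inter, Finset.mem_insert, Finset.mem_singleton] at hx ⊢
            rcases hx with ⟨h1 | h1, h2⟩ <;> subst h1 <;>
              first | rfl | exact absurd h2 hmid
          have := Finset.card_le_card hsub
          simp at this; omega

/-- If the bottom `μ` rows `[2^n - μ + 1, 2^n]` of the leftmost column are frozen
(contained in `F̃`), then no stopping set of `G_{2^n}` avoiding all frozen
leftmost-column nodes contains a rightmost-column node from the bottom `μ` rows. -/
theorem no_bottom_leaf_of_bottom_frozen (n μ : ℕ) (F : Finset ℕ)
    (hF : F ⊆ Finset.Icc 1 (2 ^ n))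
    (hbot : Finset.Icc (2 ^ n - μ + 1) (2 ^ n) ⊆ F)
    (ψ : Finset (ℕ × ℕ)) (hψ : IsStoppingSet n ψ)
    (havoid : ∀ j ∈ F, (1, j) ∉ ψ) :
    ∀ i, 2 ^ n - μ + 1 ≤ i → i ≤ 2 ^ n → (n + 1, i) ∉ ψ := by
  intro i hL _ hmem
  exact key_prop n μ F hbot ψ hψ havoid (n * (2 ^ n + 1) + (2 ^ n - i)) n i le_rfl hmem hL
end

section
/- Let Ñ = 2^n. If all variable nodes v_{1,i} for Ñ − μ + 1 ≤ i ≤ Ñ in the leftmost column of the factor graph G_{Ñ} are set to zero, then in any valid assignment satisfying all check constraints of G_{Ñ}, every variable node v_{k,i} with Ñ − μ + 1 ≤ i ≤ Ñ and 1 ≤ k ≤ n+1 equals zero. -/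
lemma zmod2_two (a b : ZMod 2) (h : a + b = 0) : b = a := by
  revert a b; decide

lemma zmod2_three (a b c : ZMod 2) (h : a + (b + c) = 0) : b = a + c := by
  revert a b c; decide

lemma sum_bound {n k i : ℕ} (hk1 : 1 ≤ k) (hk2 : k ≤ n) (hi : i ≤ 2 ^ n)
    (hi1 : 1 ≤ i) (hmod : (i - 1) % 2 ^ (n - k + 1) < 2 ^ (n - k)) :
    i + 2 ^ (n - k) ≤ 2 ^ n ∧
    ¬ (i + 2 ^ (n - k) - 1) % 2 ^ (n - k + 1) < 2 ^ (n - k) := by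
  set d := 2 ^ (n - k) with hd
  have hD : 2 ^ (n - k + 1) = 2 * d := by rw [hd, pow_succ]; ring
  rw [hD] at hmod ⊢
  have hdpos : 0 < d := Nat.pow_pos (by norm_num)
  have hqr : 2 * d * ((i - 1) / (2 * d)) + (i - 1) % (2 * d) = i - 1 :=
    Nat.div_add_mod _ _
  set q := (i - 1) / (2 * d) with hq
  set r := (i - 1) % (2 * d) with hr
  obtain ⟨M, hM⟩ : ∃ M, 2 ^ n = (2 * d) * M := by
    refine ⟨2 ^ (k - 1), ?_⟩
    rw [hd, ← pow_succ', ← pow_add]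
    congr 1
    omega
  have hqM : q < M := by
    refine Nat.lt_of_mul_lt_mul_left (a := 2 * d) ?_
    rw [← hM]; omega
  have h2 : 2 * d * (q + 1) ≤ 2 * d * M := Nat.mul_le_mul_left _ (by omega)
  have h3 : 2 * d * (q + 1) = 2 * d * q + 2 * d := by ring
  have hbound : i + d ≤ 2 ^ n := by omega
  refine ⟨hbound, ?_⟩
  have hmm : (i + d - 1) % (2 * d) = r + d := by
    have h1 : i + d - 1 = 2 * d * q + (r + d) := by omega
    rw [h1, Nat.mul_add_mod, Nat.mod_eq_of_lt (by omega)]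
  omega

/-- If all leftmost-column variable nodes in the bottom `μ` rows of `G_{2^n}` are
zero, then in any assignment over GF(2) satisfying every check constraint (the XOR
of the neighbors of each check node is zero), every variable node in the bottom `μ`
rows, in every column, is zero. -/
theorem bottom_rows_zero (n μ : ℕ) (x : ℕ × ℕ → ZMod 2)
    (hcheck : ∀ k i, IsCheck n k i → ∑ v ∈ chkNbrs n k i, x v = 0)
    (hfrozen : ∀ i, 2 ^ n - μ + 1 ≤ i → i ≤ 2 ^ n → x (1, i) = 0) :
    ∀ k i, 1 ≤ k → k ≤ n + 1 → 2 ^ n - μ + 1 ≤ i → i ≤ 2 ^ n → x (k, i) = 0 := by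
  intro k
  induction k with
  | zero => intro i h1 _ _ _; omega
  | succ k ih =>
    intro i _ hk2 hi1 hi2
    have hii : 1 ≤ i := by omega
    rcases Nat.eq_zero_or_pos k with hk0 | hk1
    · subst hk0; exact hfrozen i hi1 hi2
    · have hkn : k ≤ n := by omega
      have deg2 : ∀ j, 1 ≤ j → j ≤ 2 ^ n →
          ¬ (j - 1) % 2 ^ (n - k + 1) < 2 ^ (n - k) → x (k + 1, j) = x (k, j) := by
        intro j hj1 hj2 hm
        have hc := hcheck k j ⟨hk1, hkn, hj1, hj2⟩
        rw [chkNbrs, if_neg hm, Finset.sum_pair (by simp)] at hc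
        exact zmod2_two _ _ hc
      by_cases hm : (i - 1) % 2 ^ (n - k + 1) < 2 ^ (n - k)
      · have hc := hcheck k i ⟨hk1, hkn, hii, hi2⟩
        rw [chkNbrs, if_pos hm] at hc
        obtain ⟨hb, hm'⟩ := sum_bound hk1 hkn hi2 hii hm
        have hne1 : ((k : ℕ), i) ∉ ({(k + 1, i), (k + 1, i + 2 ^ (n - k))} : Finset (ℕ × ℕ)) := by
          simp [Prod.ext_iff]
        have hne2 : ((k + 1 : ℕ), i) ≠ (k + 1, i + 2 ^ (n - k)) := by
          have : 0 < 2 ^ (n - k) := Nat.pow_pos (by norm_num)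
          simp [Prod.ext_iff]
        rw [Finset.sum_insert hne1, Finset.sum_pair hne2] at hc
        have h3 := zmod2_three _ _ _ hc
        rw [h3, ih i hk1 (by omega) hi1 hi2,
          deg2 (i + 2 ^ (n - k)) (by omega) hb hm',
          ih (i + 2 ^ (n - k)) hk1 (by omega) (by omega) hb]
        rfl
      · rw [deg2 i hii hi2 hm]
        exact ih i hk1 (by omega) hi1 hi2
end

section
/- Let A_l be the information index set of a polar code of length N_l = 2^n used at the base layer. Then the minimum leaf-set size over all stopping sets of G_{N_l} avoiding the frozen leftmost-column nodes equals min over i ∈ A_l of f_i^{N_l}, the leaf-set size of the stopping tree rooted at v_{1,i}. Consequently the undecodable threshold α_min = min_{i ∈ A_l} T_{N_l}(i). -/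
/-! ### Basic helpers -/

lemma exists_other {n k i : ℕ} {ψ : Finset (ℕ × ℕ)} (h : IsStoppingSet n ψ)
    (hk : IsCheck n k i) {v : ℕ × ℕ} (hv : v ∈ chkNbrs n k i) (hvψ : v ∈ ψ) :
    ∃ w ∈ chkNbrs n k i, w ∈ ψ ∧ w ≠ v := by
  have h2 := h.2 k i hk ⟨v, hv, hvψ⟩
  have h3 : 1 < (chkNbrs n k i ∩ ψ).card := by omega
  obtain ⟨w, hw, hne⟩ := Finset.exists_mem_ne h3 v
  exact ⟨w, (Finset.mem_inter.mp hw).1, (Finset.mem_inter.mp hw).2, hne⟩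

lemma chkNbrs_stage1_top (m j : ℕ) (h1 : 1 ≤ j) (h2 : j ≤ 2 ^ m) :
    chkNbrs (m + 1) 1 j = {(1, j), (2, j), (2, j + 2 ^ m)} := by
  have hlt : j - 1 < 2 ^ (m + 1) := by
    have : 2 ^ m ≤ 2 ^ (m + 1) := Nat.pow_le_pow_right (by norm_num) (by omega)
    omega
  unfold chkNbrs
  simp only [Nat.succ_sub_one]
  rw [if_pos]
  rw [Nat.mod_eq_of_lt hlt]
  omega

lemma chkNbrs_stage1_bot (m j : ℕ) (h2 : 2 ^ m < j) (h3 : j ≤ 2 ^ (m + 1)) :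
    chkNbrs (m + 1) 1 j = {(1, j), (2, j)} := by
  have hlt : j - 1 < 2 ^ (m + 1) := by omega
  unfold chkNbrs
  simp only [Nat.succ_sub_one]
  rw [if_neg]
  rw [Nat.mod_eq_of_lt hlt]
  omega

lemma self_mem_chkNbrs (n k i : ℕ) : (k, i) ∈ chkNbrs n k i := by
  unfold chkNbrs; split <;> simp

lemma mem_chkNbrs_fst {n k i : ℕ} {w : ℕ × ℕ} (hw : w ∈ chkNbrs n k i) :
    w = (k, i) ∨ w.1 = k + 1 := by
  unfold chkNbrs at hw
  split at hw
  · simp only [Finset.mem_insert, Finset.mem_singleton] at hw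
    rcases hw with h | h | h <;> simp [h]
  · simp only [Finset.mem_insert, Finset.mem_singleton] at hw
    rcases hw with h | h <;> simp [h]

lemma slant_le {M s i : ℕ} (hsM : s + 1 ≤ M) (h1 : 1 ≤ i) (h2 : i ≤ 2 ^ M)
    (hr : (i - 1) % 2 ^ (s + 1) < 2 ^ s) : i + 2 ^ s ≤ 2 ^ M := by
  have hd : 2 ^ M = 2 ^ (s + 1) * 2 ^ (M - (s + 1)) := by
    rw [← pow_add]; congr 1; omega
  have hdm := Nat.div_add_mod (i - 1) (2 ^ (s + 1))
  set q := (i - 1) / 2 ^ (s + 1) with hq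
  have hq1 : q + 1 ≤ 2 ^ (M - (s + 1)) := by
    by_contra h
    push_neg at h
    have : 2 ^ (s + 1) * 2 ^ (M - (s + 1)) ≤ 2 ^ (s + 1) * q := Nat.mul_le_mul_left _ (by omega)
    omega
  have h2' : 2 ^ (s + 1) * (q + 1) ≤ 2 ^ (s + 1) * 2 ^ (M - (s + 1)) := Nat.mul_le_mul_left _ hq1
  have hps : 2 ^ (s + 1) = 2 ^ s + 2 ^ s := by rw [pow_succ]; omega
  have hexp : 2 ^ (s + 1) * (q + 1) = 2 ^ (s + 1) * q + 2 ^ (s + 1) := by ring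
  omega

lemma mod_add_pow (i s m : ℕ) (hs : s + 1 ≤ m) :
    (i + 2 ^ m) % 2 ^ (s + 1) = i % 2 ^ (s + 1) := by
  have hd : 2 ^ m = 2 ^ (s + 1) * 2 ^ (m - (s + 1)) := by
    rw [← pow_add]; congr 1; omega
  rw [hd, Nat.add_mul_mod_self_left]

/-! ### Graph decomposition -/

lemma chkNbrs_succ (m k i : ℕ) :
    chkNbrs (m + 1) (k + 1) i = (chkNbrs m k i).image (fun v => (v.1 + 1, v.2)) := by
  unfold chkNbrs
  simp only [Nat.succ_sub_succ]
  split <;> simp [Finset.image_insert]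

lemma chkNbrs_succ_add (m k i : ℕ) (hk : 1 ≤ k) (hkm : k ≤ m) (hi : 1 ≤ i) :
    chkNbrs (m + 1) (k + 1) (i + 2 ^ m) =
      (chkNbrs m k i).image (fun v => (v.1 + 1, v.2 + 2 ^ m)) := by
  have hp : 1 ≤ 2 ^ m := Nat.one_le_two_pow
  have hmod : (i + 2 ^ m - 1) % 2 ^ (m - k + 1) = (i - 1) % 2 ^ (m - k + 1) := by
    have h1 : i + 2 ^ m - 1 = (i - 1) + 2 ^ m := by omega
    rw [h1, mod_add_pow _ _ _ (by omega)]
  unfold chkNbrs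
  simp only [Nat.succ_sub_succ]
  rw [hmod]
  split <;> (ext ⟨x, y⟩ ; (simp only [Finset.image_insert, Finset.image_singleton,
      Finset.mem_insert, Finset.mem_singleton, Prod.mk.injEq]) <;> omega)

def shiftTop (m : ℕ) (ψ : Finset (ℕ × ℕ)) : Finset (ℕ × ℕ) :=
  (ψ.filter (fun v => 2 ≤ v.1 ∧ v.2 ≤ 2 ^ m)).image (fun v => (v.1 - 1, v.2))

def shiftBot (m : ℕ) (ψ : Finset (ℕ × ℕ)) : Finset (ℕ × ℕ) :=
  (ψ.filter (fun v => 2 ≤ v.1 ∧ 2 ^ m < v.2)).image (fun v => (v.1 - 1, v.2 - 2 ^ m))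

lemma mem_shiftTop {m k i : ℕ} {ψ : Finset (ℕ × ℕ)} :
    (k, i) ∈ shiftTop m ψ ↔ 1 ≤ k ∧ (k + 1, i) ∈ ψ ∧ i ≤ 2 ^ m := by
  simp only [shiftTop, Finset.mem_image, Finset.mem_filter]
  constructor
  · rintro ⟨⟨a, b⟩, ⟨hmem, h2, h3⟩, heq⟩
    simp only [Prod.mk.injEq] at heq
    have : a = k + 1 := by omega
    subst this
    have : b = i := heq.2
    subst this
    exact ⟨by omega, hmem, h3⟩
  · rintro ⟨h1, h2, h3⟩
    exact ⟨(k + 1, i), ⟨h2, by omega, h3⟩, by simp⟩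

lemma mem_shiftBot {m k i : ℕ} {ψ : Finset (ℕ × ℕ)} :
    (k, i) ∈ shiftBot m ψ ↔ 1 ≤ k ∧ 1 ≤ i ∧ (k + 1, i + 2 ^ m) ∈ ψ := by
  simp only [shiftBot, Finset.mem_image, Finset.mem_filter]
  constructor
  · rintro ⟨⟨a, b⟩, ⟨hmem, h2, h3⟩, heq⟩
    simp only [Prod.mk.injEq] at heq
    have ha : a = k + 1 := by omega
    have hb : b = i + 2 ^ m := by omega
    subst ha; subst hb
    exact ⟨by omega, by omega, hmem⟩
  · rintro ⟨h1, h1', h2⟩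
    exact ⟨(k + 1, i + 2 ^ m), ⟨h2, by omega, by omega⟩, by simp⟩

lemma card_inter_image_le {f : ℕ × ℕ → ℕ × ℕ} (hf : Function.Injective f)
    (S : Finset (ℕ × ℕ)) (ψ T : Finset (ℕ × ℕ)) (h : ∀ u ∈ S, f u ∈ ψ → u ∈ T) :
    ((S.image f) ∩ ψ).card ≤ (S ∩ T).card := by
  have hsub : (S.image f) ∩ ψ ⊆ (S ∩ T).image f := by
    intro w hw
    rw [Finset.mem_inter] at hw
    obtain ⟨hw1, hw2⟩ := hw
    rw [Finset.mem_image] at hw1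
    obtain ⟨u, huS, rfl⟩ := hw1
    exact Finset.mem_image_of_mem f (Finset.mem_inter.mpr ⟨huS, h u huS hw2⟩)
  calc ((S.image f) ∩ ψ).card ≤ ((S ∩ T).image f).card := Finset.card_le_card hsub
    _ = (S ∩ T).card := Finset.card_image_of_injective _ hf

lemma shiftTop_stopping {m : ℕ} {ψ : Finset (ℕ × ℕ)} (h : IsStoppingSet (m + 1) ψ) :
    IsStoppingSet m (shiftTop m ψ) := by
  constructor
  · rintro ⟨k, i⟩ hv
    rw [mem_shiftTop] at hv
    obtain ⟨h1, h2, h3⟩ := hv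
    have := h.1 _ h2
    obtain ⟨a1, a2, a3, a4⟩ := this
    exact ⟨h1, by simp at a2 ⊢; omega, a3, h3⟩
  · intro k i hk hact
    obtain ⟨hk1, hk2, hi1, hi2⟩ := hk
    have hck : IsCheck (m + 1) (k + 1) i := by
      refine ⟨by omega, by omega, hi1, ?_⟩
      have : (2:ℕ) ^ m ≤ 2 ^ (m + 1) := Nat.pow_le_pow_right (by norm_num) (by omega)
      omega
    -- activated in ψ
    obtain ⟨⟨a, b⟩, hv1, hv2⟩ := hact
    rw [mem_shiftTop] at hv2
    have hact' : ∃ v ∈ chkNbrs (m + 1) (k + 1) i, v ∈ ψ := by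
      refine ⟨(a + 1, b), ?_, hv2.2.1⟩
      rw [chkNbrs_succ]
      exact Finset.mem_image_of_mem _ hv1
    have h2card := h.2 (k + 1) i hck hact'
    rw [chkNbrs_succ] at h2card
    have hinj : Function.Injective (fun v : ℕ × ℕ => (v.1 + 1, v.2)) := by
      rintro ⟨x1, x2⟩ ⟨y1, y2⟩ he
      simp only [Prod.mk.injEq] at he ⊢
      omega
    have := card_inter_image_le hinj (chkNbrs m k i) ψ (shiftTop m ψ) ?_
    · omega
    · rintro ⟨a, b⟩ hu hψ
      rw [mem_shiftTop]
      have hfst := mem_chkNbrs_fst hu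
      have ha : 1 ≤ a := by
        rcases hfst with h | h
        · simp at h; omega
        · simp at h; omega
      refine ⟨ha, hψ, ?_⟩
      -- b ≤ 2^m
      unfold chkNbrs at hu
      split at hu
      · rename_i hcond
        simp only [Finset.mem_insert, Finset.mem_singleton, Prod.mk.injEq] at hu
        rcases hu with ⟨_, rfl⟩ | ⟨_, rfl⟩ | ⟨_, rfl⟩
        · exact hi2
        · exact hi2
        · exact slant_le (by omega) hi1 hi2 hcond
      · simp only [Finset.mem_insert, Finset.mem_singleton, Prod.mk.injEq] at hu
        rcases hu with ⟨_, rfl⟩ | ⟨_, rfl⟩ <;> exact hi2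

lemma mem_chkNbrs' {n k i w1 w2 : ℕ} (hw : (w1, w2) ∈ chkNbrs n k i) :
    (w1 = k ∧ w2 = i) ∨ (w1 = k + 1 ∧ w2 = i) ∨ (w1 = k + 1 ∧ w2 = i + 2 ^ (n - k)) := by
  unfold chkNbrs at hw
  split at hw <;>
    simp only [Finset.mem_insert, Finset.mem_singleton, Prod.mk.injEq] at hw <;> tauto

lemma shiftBot_stopping {m : ℕ} {ψ : Finset (ℕ × ℕ)} (h : IsStoppingSet (m + 1) ψ) :
    IsStoppingSet m (shiftBot m ψ) := by
  have hpm : (1:ℕ) ≤ 2 ^ m := Nat.one_le_two_pow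
  have hpm2 : (2:ℕ) ^ (m + 1) = 2 ^ m + 2 ^ m := by rw [pow_succ]; omega
  constructor
  · rintro ⟨k, i⟩ hv
    rw [mem_shiftBot] at hv
    obtain ⟨h1, h1', h2⟩ := hv
    have := h.1 _ h2
    obtain ⟨a1, a2, a3, a4⟩ := this
    simp only at a2 a4
    exact ⟨h1, by omega, h1', by omega⟩
  · intro k i hk hact
    obtain ⟨hk1, hk2, hi1, hi2⟩ := hk
    have hck : IsCheck (m + 1) (k + 1) (i + 2 ^ m) := ⟨by omega, by omega, by omega, by omega⟩
    obtain ⟨⟨a, b⟩, hv1, hv2⟩ := hact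
    rw [mem_shiftBot] at hv2
    have hact' : ∃ v ∈ chkNbrs (m + 1) (k + 1) (i + 2 ^ m), v ∈ ψ := by
      refine ⟨(a + 1, b + 2 ^ m), ?_, hv2.2.2⟩
      rw [chkNbrs_succ_add m k i hk1 hk2 hi1]
      exact Finset.mem_image_of_mem _ hv1
    have h2card := h.2 (k + 1) (i + 2 ^ m) hck hact'
    rw [chkNbrs_succ_add m k i hk1 hk2 hi1] at h2card
    have hinj : Function.Injective (fun v : ℕ × ℕ => (v.1 + 1, v.2 + 2 ^ m)) := by
      rintro ⟨x1, x2⟩ ⟨y1, y2⟩ he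
      simp only [Prod.mk.injEq] at he ⊢
      omega
    have := card_inter_image_le hinj (chkNbrs m k i) ψ (shiftBot m ψ) ?_
    · omega
    · rintro ⟨u1, u2⟩ hu hψ
      rw [mem_shiftBot]
      have h2p : (1:ℕ) ≤ 2 ^ (m - k) := Nat.one_le_two_pow
      rcases mem_chkNbrs' hu with ⟨e1, e2⟩ | ⟨e1, e2⟩ | ⟨e1, e2⟩ <;> subst e1 <;> subst e2 <;>
        exact ⟨by omega, by omega, hψ⟩

/-! ### Leaf set decomposition -/

lemma mem_leafSet {n k i : ℕ} {ψ : Finset (ℕ × ℕ)} :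
    (k, i) ∈ leafSet n ψ ↔ (k, i) ∈ ψ ∧ k = n + 1 := by
  simp [leafSet]

lemma leafSet_top_eq {m : ℕ} (ψ : Finset (ℕ × ℕ)) :
    leafSet m (shiftTop m ψ) =
      ((leafSet (m + 1) ψ).filter (fun v => v.2 ≤ 2 ^ m)).image (fun v => (v.1 - 1, v.2)) := by
  ext ⟨k, i⟩
  rw [mem_leafSet]
  simp only [Finset.mem_image, Finset.mem_filter]
  constructor
  · rintro ⟨h1, h2⟩
    subst h2
    rw [mem_shiftTop] at h1
    obtain ⟨_, h2, h3⟩ := h1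
    refine ⟨(m + 1 + 1, i), ⟨?_, h3⟩, by simp⟩
    rw [mem_leafSet]
    exact ⟨h2, rfl⟩
  · rintro ⟨⟨a, b⟩, ⟨ha, hb⟩, heq⟩
    rw [mem_leafSet] at ha
    obtain ⟨ha1, ha2⟩ := ha
    subst ha2
    simp only [Prod.mk.injEq] at heq hb
    obtain ⟨e1, e2⟩ := heq
    subst e2
    have hk : k = m + 1 := by omega
    subst hk
    exact ⟨mem_shiftTop.mpr ⟨by omega, ha1, hb⟩, rfl⟩

lemma leafSet_bot_eq {m : ℕ} (ψ : Finset (ℕ × ℕ)) :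
    leafSet m (shiftBot m ψ) =
      ((leafSet (m + 1) ψ).filter (fun v => ¬ v.2 ≤ 2 ^ m)).image
        (fun v => (v.1 - 1, v.2 - 2 ^ m)) := by
  ext ⟨k, i⟩
  rw [mem_leafSet]
  simp only [Finset.mem_image, Finset.mem_filter]
  constructor
  · rintro ⟨h1, h2⟩
    subst h2
    rw [mem_shiftBot] at h1
    obtain ⟨_, h1', h2⟩ := h1
    refine ⟨(m + 1 + 1, i + 2 ^ m), ⟨?_, by simp; omega⟩, by simp⟩
    rw [mem_leafSet]
    exact ⟨h2, rfl⟩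
  · rintro ⟨⟨a, b⟩, ⟨ha, hb⟩, heq⟩
    rw [mem_leafSet] at ha
    obtain ⟨ha1, ha2⟩ := ha
    subst ha2
    simp only [Prod.mk.injEq] at heq hb
    obtain ⟨e1, e2⟩ := heq
    have hk : k = m + 1 := by omega
    subst hk
    refine ⟨mem_shiftBot.mpr ⟨by omega, by omega, ?_⟩, rfl⟩
    rw [show i + 2 ^ m = b by omega]
    exact ha1

lemma leaf_card_split {m : ℕ} (ψ : Finset (ℕ × ℕ)) :
    (leafSet (m + 1) ψ).card =
      (leafSet m (shiftTop m ψ)).card + (leafSet m (shiftBot m ψ)).card := by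
  rw [leafSet_top_eq, leafSet_bot_eq]
  rw [Finset.card_image_of_injOn, Finset.card_image_of_injOn]
  · exact (Finset.card_filter_add_card_filter_not
      (p := fun v : ℕ × ℕ => v.2 ≤ 2 ^ m) (s := leafSet (m + 1) ψ)).symm
  · rintro ⟨a, b⟩ ha ⟨c, d⟩ hc he
    simp only [Finset.mem_coe, Finset.mem_filter, mem_leafSet] at ha hc
    simp only [Prod.mk.injEq] at he ⊢
    obtain ⟨⟨_, ha2⟩, hb⟩ := ha
    obtain ⟨⟨_, hc2⟩, hd⟩ := hc
    constructor <;> omega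
  · rintro ⟨a, b⟩ ha ⟨c, d⟩ hc he
    simp only [Finset.mem_coe, Finset.mem_filter, mem_leafSet] at ha hc
    simp only [Prod.mk.injEq] at he ⊢
    obtain ⟨⟨_, ha2⟩, hb⟩ := ha
    obtain ⟨⟨_, hc2⟩, hd⟩ := hc
    constructor <;> omega

/-! ### Stage-1 propagation -/

def rootsOf (φ : Finset (ℕ × ℕ)) : Finset ℕ := (φ.filter (fun v => v.1 = 1)).image Prod.snd

lemma mem_rootsOf {φ : Finset (ℕ × ℕ)} {j : ℕ} : j ∈ rootsOf φ ↔ (1, j) ∈ φ := by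
  simp only [rootsOf, Finset.mem_image, Finset.mem_filter]
  constructor
  · rintro ⟨⟨a, b⟩, ⟨h1, h2⟩, h3⟩
    simp only at h2 h3
    subst h2; subst h3
    exact h1
  · intro h
    exact ⟨(1, j), ⟨h, rfl⟩, rfl⟩

section Prop1
variable {m : ℕ} {ψ : Finset (ℕ × ℕ)} (h : IsStoppingSet (m + 1) ψ)

private lemma pow_succ_eq (m : ℕ) : (2:ℕ) ^ (m + 1) = 2 ^ m + 2 ^ m := by rw [pow_succ]; omega

include h in
/-- C1: a top column-2 node propagates left or slant-down. -/
lemma prop_top (j : ℕ) (hj : (2, j) ∈ ψ) (hj2 : j ≤ 2 ^ m) :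
    (1, j) ∈ ψ ∨ (2, j + 2 ^ m) ∈ ψ := by
  have hvn := h.1 _ hj
  obtain ⟨_, _, hj1, _⟩ := hvn
  simp only at hj1
  have hck : IsCheck (m + 1) 1 j := ⟨le_refl 1, by omega, hj1, by have := pow_succ_eq m; omega⟩
  have hnb := chkNbrs_stage1_top m j hj1 hj2
  have hmem : (2, j) ∈ chkNbrs (m + 1) 1 j := by rw [hnb]; simp
  obtain ⟨w, hw1, hw2, hw3⟩ := exists_other h hck hmem hj
  rw [hnb] at hw1
  simp only [Finset.mem_insert, Finset.mem_singleton] at hw1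
  rcases hw1 with rfl | rfl | rfl
  · exact Or.inl hw2
  · exact absurd rfl hw3
  · exact Or.inr hw2

include h in
/-- C2: a bottom column-2 node forces its column-1 node. -/
lemma prop_bot (j : ℕ) (hj : (2, j) ∈ ψ) (hj2 : 2 ^ m < j) : (1, j) ∈ ψ := by
  have hvn := h.1 _ hj
  obtain ⟨_, _, hj1, hj3⟩ := hvn
  simp only at hj1 hj3
  have hck : IsCheck (m + 1) 1 j := ⟨le_refl 1, by omega, hj1, hj3⟩
  have hnb := chkNbrs_stage1_bot m j hj2 hj3
  have hmem : (2, j) ∈ chkNbrs (m + 1) 1 j := by rw [hnb]; simp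
  obtain ⟨w, hw1, hw2, hw3⟩ := exists_other h hck hmem hj
  rw [hnb] at hw1
  simp only [Finset.mem_insert, Finset.mem_singleton] at hw1
  rcases hw1 with rfl | rfl
  · exact hw2
  · exact absurd rfl hw3

include h in
/-- C3: a slanted column-2 node propagates into the top block. -/
lemma prop_slant (j : ℕ) (hj : (2, j + 2 ^ m) ∈ ψ) (hj1 : 1 ≤ j) (hj2 : j ≤ 2 ^ m) :
    (1, j) ∈ ψ ∨ (2, j) ∈ ψ := by
  have hck : IsCheck (m + 1) 1 j := ⟨le_refl 1, by omega, hj1, by have := pow_succ_eq m; omega⟩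
  have hnb := chkNbrs_stage1_top m j hj1 hj2
  have hmem : (2, j + 2 ^ m) ∈ chkNbrs (m + 1) 1 j := by rw [hnb]; simp
  obtain ⟨w, hw1, hw2, hw3⟩ := exists_other h hck hmem hj
  rw [hnb] at hw1
  simp only [Finset.mem_insert, Finset.mem_singleton] at hw1
  rcases hw1 with rfl | rfl | rfl
  · exact Or.inl hw2
  · exact Or.inr hw2
  · exact absurd rfl hw3

include h in
/-- A column-1 node activates its check: top case. -/
lemma prop_root_top (j : ℕ) (hj : (1, j) ∈ ψ) (hj2 : j ≤ 2 ^ m) :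
    (2, j) ∈ ψ ∨ (2, j + 2 ^ m) ∈ ψ := by
  have hvn := h.1 _ hj
  obtain ⟨_, _, hj1, _⟩ := hvn
  simp only at hj1
  have hck : IsCheck (m + 1) 1 j := ⟨le_refl 1, by omega, hj1, by have := pow_succ_eq m; omega⟩
  have hnb := chkNbrs_stage1_top m j hj1 hj2
  have hmem : (1, j) ∈ chkNbrs (m + 1) 1 j := by rw [hnb]; simp
  obtain ⟨w, hw1, hw2, hw3⟩ := exists_other h hck hmem hj
  rw [hnb] at hw1
  simp only [Finset.mem_insert, Finset.mem_singleton] at hw1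
  rcases hw1 with rfl | rfl | rfl
  · exact absurd rfl hw3
  · exact Or.inl hw2
  · exact Or.inr hw2

include h in
/-- A column-1 node activates its check: bottom case. -/
lemma prop_root_bot (j : ℕ) (hj : (1, j) ∈ ψ) (hj2 : 2 ^ m < j) : (2, j) ∈ ψ := by
  have hvn := h.1 _ hj
  obtain ⟨_, _, hj1, hj3⟩ := hvn
  simp only at hj1 hj3
  have hck : IsCheck (m + 1) 1 j := ⟨le_refl 1, by omega, hj1, hj3⟩
  have hnb := chkNbrs_stage1_bot m j hj2 hj3
  have hmem : (1, j) ∈ chkNbrs (m + 1) 1 j := by rw [hnb]; simp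
  obtain ⟨w, hw1, hw2, hw3⟩ := exists_other h hck hmem hj
  rw [hnb] at hw1
  simp only [Finset.mem_insert, Finset.mem_singleton] at hw1
  rcases hw1 with rfl | rfl
  · exact absurd rfl hw3
  · exact hw2

end Prop1

/-! ### Key lower bound -/

lemma key : ∀ n ψ, IsStoppingSet n ψ → ψ.Nonempty →
    ∃ j, (1, j) ∈ ψ ∧ Tvec n j ≤ (leafSet n ψ).card := by
  intro n
  induction n with
  | zero =>
    intro ψ hss hne
    obtain ⟨⟨a, b⟩, hab⟩ := hne
    obtain ⟨h1, h2, h3, h4⟩ := hss.1 _ hab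
    simp only at h1 h2 h3 h4
    have hp : (2:ℕ) ^ 0 = 1 := rfl
    have ha : a = 1 := by omega
    have hb : b = 1 := by omega
    subst ha; subst hb
    refine ⟨1, hab, ?_⟩
    have hm : (1, 1) ∈ leafSet 0 ψ := mem_leafSet.mpr ⟨hab, rfl⟩
    have hc := Finset.card_pos.mpr ⟨(1, 1), hm⟩
    simpa [Tvec] using hc
  | succ m ih =>
    intro ψ hss hne
    have hsplit := leaf_card_split (m := m) ψ
    have hpm2 : (2:ℕ) ^ (m + 1) = 2 ^ m + 2 ^ m := by rw [pow_succ]; omega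
    by_cases htop : (shiftTop m ψ).Nonempty
    · by_cases hbot : (shiftBot m ψ).Nonempty
      · obtain ⟨a, ha, hla⟩ := ih _ (shiftTop_stopping hss) htop
        obtain ⟨b, hb, hlb⟩ := ih _ (shiftBot_stopping hss) hbot
        have hU : (rootsOf (shiftTop m ψ) ∪ rootsOf (shiftBot m ψ)).Nonempty :=
          ⟨a, Finset.mem_union_left _ (mem_rootsOf.mpr ha)⟩
        obtain ⟨j, hjU, hjmin⟩ := Finset.exists_min_image _ (Tvec m) hU
        have hja : Tvec m j ≤ Tvec m a := hjmin a (Finset.mem_union_left _ (mem_rootsOf.mpr ha))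
        have hjb : Tvec m j ≤ Tvec m b := hjmin b (Finset.mem_union_right _ (mem_rootsOf.mpr hb))
        have hltop : Tvec m j ≤ (leafSet m (shiftTop m ψ)).card := le_trans hja hla
        have hlbot : Tvec m j ≤ (leafSet m (shiftBot m ψ)).card := le_trans hjb hlb
        have hjbounds : 1 ≤ j ∧ j ≤ 2 ^ m := by
          rcases Finset.mem_union.mp hjU with hj | hj
          · rw [mem_rootsOf] at hj
            have := (shiftTop_stopping hss).1 _ hj
            exact ⟨this.2.2.1, this.2.2.2⟩
          · rw [mem_rootsOf] at hj
            have := (shiftBot_stopping hss).1 _ hj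
            exact ⟨this.2.2.1, this.2.2.2⟩
        by_cases hroot : (1, j) ∈ ψ
        · refine ⟨j, hroot, ?_⟩
          have hTj : Tvec (m + 1) j = Tvec m j := by
            simp only [Tvec]
            rw [if_pos hjbounds.2]
          rw [hsplit, hTj]
          omega
        · have hboth : (2, j) ∈ ψ ∧ (2, j + 2 ^ m) ∈ ψ := by
            rcases Finset.mem_union.mp hjU with hj | hj
            · rw [mem_rootsOf, mem_shiftTop] at hj
              have h2j : (2, j) ∈ ψ := hj.2.1
              rcases prop_top hss j h2j hjbounds.2 with h | h
              · exact absurd h hroot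
              · exact ⟨h2j, h⟩
            · rw [mem_rootsOf, mem_shiftBot] at hj
              have h2j : (2, j + 2 ^ m) ∈ ψ := hj.2.2
              rcases prop_slant hss j h2j hjbounds.1 hjbounds.2 with h | h
              · exact absurd h hroot
              · exact ⟨h, h2j⟩
          have h1 : (1, j + 2 ^ m) ∈ ψ := prop_bot hss _ hboth.2 (by omega)
          refine ⟨j + 2 ^ m, h1, ?_⟩
          have hT : Tvec (m + 1) (j + 2 ^ m) = 2 * Tvec m j := by
            simp only [Tvec]
            rw [if_neg (by omega), Nat.add_sub_cancel]
          rw [hsplit, hT]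
          omega
      · obtain ⟨a, ha, hla⟩ := ih _ (shiftTop_stopping hss) htop
        have hamem := ha
        rw [mem_shiftTop] at ha
        obtain ⟨_, h2a, ha2⟩ := ha
        have ha1 : 1 ≤ a := ((shiftTop_stopping hss).1 _ hamem).2.2.1
        have hb0 : (leafSet m (shiftBot m ψ)).card = 0 := by
          rw [Finset.not_nonempty_iff_eq_empty] at hbot
          simp [hbot, leafSet]
        rcases prop_top hss a h2a ha2 with h | h
        · refine ⟨a, h, ?_⟩
          have hT : Tvec (m + 1) a = Tvec m a := by simp only [Tvec]; rw [if_pos ha2]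
          rw [hsplit, hT]
          omega
        · exact absurd ⟨(1, a), mem_shiftBot.mpr ⟨le_refl 1, ha1, h⟩⟩ hbot
    · by_cases hbot : (shiftBot m ψ).Nonempty
      · obtain ⟨b, hb, hlb⟩ := ih _ (shiftBot_stopping hss) hbot
        have hbmem := hb
        rw [mem_shiftBot] at hb
        obtain ⟨_, hb1, h2b⟩ := hb
        have hb2 : b ≤ 2 ^ m := ((shiftBot_stopping hss).1 _ hbmem).2.2.2
        have ht0 : (leafSet m (shiftTop m ψ)).card = 0 := by
          rw [Finset.not_nonempty_iff_eq_empty] at htop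
          simp [htop, leafSet]
        rcases prop_slant hss b h2b hb1 hb2 with h | h
        · refine ⟨b, h, ?_⟩
          have hT : Tvec (m + 1) b = Tvec m b := by simp only [Tvec]; rw [if_pos hb2]
          rw [hsplit, hT]
          omega
        · exact absurd ⟨(1, b), mem_shiftTop.mpr ⟨le_refl 1, h, hb2⟩⟩ htop
      · exfalso
        obtain ⟨⟨c, d⟩, hcd⟩ := hne
        obtain ⟨hv1, hv2, hv3, hv4⟩ := hss.1 _ hcd
        simp only at hv1 hv2 hv3 hv4
        have hc1 : c = 1 := by
          by_contra hc
          by_cases hd : d ≤ 2 ^ m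
          · refine htop ⟨(c - 1, d), mem_shiftTop.mpr ⟨by omega, ?_, hd⟩⟩
            rw [show c - 1 + 1 = c by omega]
            exact hcd
          · refine hbot ⟨(c - 1, d - 2 ^ m), mem_shiftBot.mpr ⟨by omega, by omega, ?_⟩⟩
            rw [show c - 1 + 1 = c by omega, show d - 2 ^ m + 2 ^ m = d by omega]
            exact hcd
        subst hc1
        by_cases hd : d ≤ 2 ^ m
        · rcases prop_root_top hss d hcd hd with h | h
          · exact htop ⟨(1, d), mem_shiftTop.mpr ⟨le_refl 1, h, hd⟩⟩
          · exact hbot ⟨(1, d), mem_shiftBot.mpr ⟨le_refl 1, hv3, h⟩⟩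
        · have h := prop_root_bot hss d hcd (by omega)
          refine hbot ⟨(1, d - 2 ^ m), mem_shiftBot.mpr ⟨le_refl 1, by omega, ?_⟩⟩
          rw [show d - 2 ^ m + 2 ^ m = d by omega]
          exact h

/-! ### Stopping tree upper bound -/

lemma root_unique {ψ : Finset (ℕ × ℕ)} {i : ℕ} (h : ψ.filter (fun v => v.1 = 1) = {(1, i)}) :
    ∀ j, ((1, j) ∈ ψ ↔ j = i) := by
  intro j
  constructor
  · intro hj
    have hm : (1, j) ∈ ψ.filter (fun v => v.1 = 1) := Finset.mem_filter.mpr ⟨hj, rfl⟩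
    rw [h, Finset.mem_singleton] at hm
    simpa using hm
  · intro hj
    rw [hj]
    have hm : (1, i) ∈ ψ.filter (fun v => v.1 = 1) := by
      rw [h]; exact Finset.mem_singleton_self _
    exact (Finset.mem_filter.mp hm).1

lemma tree_upper : ∀ n i ψ, IsStoppingTree n i ψ → (leafSet n ψ).card ≤ Tvec n i := by
  intro n
  induction n with
  | zero =>
    intro i ψ ht
    have h : leafSet 0 ψ = {(1, i)} := ht.2
    rw [h]
    simp [Tvec]
  | succ m ih =>
    intro i ψ ht
    obtain ⟨hss, hfil⟩ := ht
    have hri : (1, i) ∈ ψ := (root_unique hfil i).mpr rfl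
    obtain ⟨_, _, hi1, hi2⟩ := hss.1 _ hri
    simp only at hi1 hi2
    have hsplit := leaf_card_split (m := m) ψ
    have hpm2 : (2:ℕ) ^ (m + 1) = 2 ^ m + 2 ^ m := by rw [pow_succ]; omega
    by_cases hitop : i ≤ 2 ^ m
    · have hbot : shiftBot m ψ = ∅ := by
        rw [← Finset.not_nonempty_iff_eq_empty]
        intro hbne
        obtain ⟨w, hw, _⟩ := key m _ (shiftBot_stopping hss) hbne
        rw [mem_shiftBot] at hw
        have hw1 : 1 ≤ w := hw.2.1
        have h1w : (1, w + 2 ^ m) ∈ ψ := prop_bot hss _ hw.2.2 (by omega)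
        have heq := (root_unique hfil _).mp h1w
        omega
      have hb0 : (leafSet m (shiftBot m ψ)).card = 0 := by simp [hbot, leafSet]
      have h2i : (2, i) ∈ ψ := by
        rcases prop_root_top hss i hri hitop with h | h
        · exact h
        · exfalso
          have hmem : (1, i) ∈ shiftBot m ψ := mem_shiftBot.mpr ⟨le_refl 1, hi1, h⟩
          simp [hbot] at hmem
      have htree : IsStoppingTree m i (shiftTop m ψ) := by
        refine ⟨shiftTop_stopping hss, ?_⟩
        ext ⟨a, b⟩
        simp only [Finset.mem_filter, Finset.mem_singleton, Prod.mk.injEq]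
        constructor
        · rintro ⟨hab, rfl⟩
          rw [mem_shiftTop] at hab
          obtain ⟨_, h2b, hb2⟩ := hab
          rcases prop_top hss b h2b hb2 with h | h
          · exact ⟨rfl, (root_unique hfil _).mp h⟩
          · exfalso
            have hb1 : 1 ≤ b := (hss.1 _ h2b).2.2.1
            have hmem : (1, b) ∈ shiftBot m ψ := mem_shiftBot.mpr ⟨le_refl 1, hb1, h⟩
            simp [hbot] at hmem
        · rintro ⟨rfl, rfl⟩
          exact ⟨mem_shiftTop.mpr ⟨le_refl 1, h2i, hitop⟩, rfl⟩
      have hih := ih i _ htree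
      have hT : Tvec (m + 1) i = Tvec m i := by
        simp only [Tvec]; rw [if_pos hitop]
      omega
    · have hi'1 : 1 ≤ i - 2 ^ m := by omega
      have hi'2 : i - 2 ^ m ≤ 2 ^ m := by omega
      have h2i : (2, i) ∈ ψ := prop_root_bot hss i hri (by omega)
      have h2i' : (2, i - 2 ^ m) ∈ ψ := by
        have h2i'' : (2, (i - 2 ^ m) + 2 ^ m) ∈ ψ := by
          rw [show (i - 2 ^ m) + 2 ^ m = i by omega]; exact h2i
        rcases prop_slant hss (i - 2 ^ m) h2i'' hi'1 hi'2 with h | h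
        · exfalso
          have heq := (root_unique hfil _).mp h
          omega
        · exact h
      have htreeT : IsStoppingTree m (i - 2 ^ m) (shiftTop m ψ) := by
        refine ⟨shiftTop_stopping hss, ?_⟩
        ext ⟨a, b⟩
        simp only [Finset.mem_filter, Finset.mem_singleton, Prod.mk.injEq]
        constructor
        · rintro ⟨hab, rfl⟩
          rw [mem_shiftTop] at hab
          obtain ⟨_, h2b, hb2⟩ := hab
          rcases prop_top hss b h2b hb2 with h | h
          · exfalso
            have heq := (root_unique hfil _).mp h
            omega
          · have hb1 : 1 ≤ b := (hss.1 _ h2b).2.2.1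
            have h1 : (1, b + 2 ^ m) ∈ ψ := prop_bot hss _ h (by omega)
            have heq := (root_unique hfil _).mp h1
            exact ⟨rfl, by omega⟩
        · rintro ⟨rfl, rfl⟩
          exact ⟨mem_shiftTop.mpr ⟨le_refl 1, h2i', hi'2⟩, rfl⟩
      have htreeB : IsStoppingTree m (i - 2 ^ m) (shiftBot m ψ) := by
        refine ⟨shiftBot_stopping hss, ?_⟩
        ext ⟨a, b⟩
        simp only [Finset.mem_filter, Finset.mem_singleton, Prod.mk.injEq]
        constructor
        · rintro ⟨hab, rfl⟩
          rw [mem_shiftBot] at hab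
          obtain ⟨_, hb1, h2b⟩ := hab
          have h1 : (1, b + 2 ^ m) ∈ ψ := prop_bot hss _ h2b (by omega)
          have heq := (root_unique hfil _).mp h1
          exact ⟨rfl, by omega⟩
        · rintro ⟨rfl, rfl⟩
          refine ⟨mem_shiftBot.mpr ⟨le_refl 1, hi'1, ?_⟩, rfl⟩
          rw [show (i - 2 ^ m) + 2 ^ m = i by omega]
          exact h2i
      have hT : Tvec (m + 1) i = 2 * Tvec m (i - 2 ^ m) := by
        simp only [Tvec]; rw [if_neg hitop]
      have hihT := ih (i - 2 ^ m) _ htreeT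
      have hihB := ih (i - 2 ^ m) _ htreeB
      omega

/-- For an information index set `A` of a polar code of length `2^n`, the minimum
leaf-set size over all (nonempty) stopping sets of `G_{2^n}` avoiding the frozen
leftmost-column nodes equals `min_{i ∈ A} f_i^{2^n}` (the leaf-set size of the
stopping tree rooted at `v_{1,i}`); consequently the undecodable threshold equals
`min_{i ∈ A} T_{2^n}(i)`. -/
theorem min_leafSet_eq_min_stoppingTree (n : ℕ) (A : Finset ℕ) (hA : A.Nonempty)
    (hsub : A ⊆ Finset.Icc 1 (2 ^ n))
    (st : ℕ → Finset (ℕ × ℕ)) (hst : ∀ i ∈ A, IsStoppingTree n i (st i)) :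
    sInf {m : ℕ | ∃ ψ : Finset (ℕ × ℕ), ψ.Nonempty ∧ IsStoppingSet n ψ ∧
        (∀ j, (1, j) ∈ ψ → j ∈ A) ∧ (leafSet n ψ).card = m} =
      A.inf' hA (fun i => (leafSet n (st i)).card) ∧
    sInf {m : ℕ | ∃ ψ : Finset (ℕ × ℕ), ψ.Nonempty ∧ IsStoppingSet n ψ ∧
        (∀ j, (1, j) ∈ ψ → j ∈ A) ∧ (leafSet n ψ).card = m} =
      A.inf' hA (fun i => Tvec n i) := by

  have hstval : ∀ i ∈ A, (leafSet n (st i)).card = Tvec n i := by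
    intro i hi
    obtain ⟨hss, hfil⟩ := hst i hi
    have hroot : (1, i) ∈ st i := (root_unique hfil i).mpr rfl
    have hne : (st i).Nonempty := ⟨_, hroot⟩
    have hupper := tree_upper n i _ (hst i hi)
    obtain ⟨j, hj, hle⟩ := key n _ hss hne
    have hji : j = i := (root_unique hfil j).mp hj
    subst hji
    omega
  have hmin_eq : A.inf' hA (fun i => (leafSet n (st i)).card) = A.inf' hA (fun i => Tvec n i) :=
    Finset.inf'_congr hA rfl hstval
  set S := {m : ℕ | ∃ ψ : Finset (ℕ × ℕ), ψ.Nonempty ∧ IsStoppingSet n ψ ∧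
      (∀ j, (1, j) ∈ ψ → j ∈ A) ∧ (leafSet n ψ).card = m} with hS
  have hmemS : ∀ i ∈ A, (leafSet n (st i)).card ∈ S := by
    intro i hi
    obtain ⟨hss, hfil⟩ := hst i hi
    refine ⟨st i, ⟨_, (root_unique hfil i).mpr rfl⟩, hss, ?_, rfl⟩
    intro j hj
    rw [(root_unique hfil j).mp hj]
    exact hi
  obtain ⟨i0, hi0, hmin⟩ := Finset.exists_mem_eq_inf' hA (fun i => Tvec n i)
  have hub : sInf S ≤ A.inf' hA (fun i => Tvec n i) := by
    rw [hmin]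
    rw [← hstval i0 hi0]
    exact Nat.sInf_le (hmemS i0 hi0)
  have hlb : A.inf' hA (fun i => Tvec n i) ≤ sInf S := by
    apply le_csInf ⟨_, hmemS i0 hi0⟩
    rintro x ⟨ψ, hne, hss, hroots, rfl⟩
    obtain ⟨j, hj, hle⟩ := key n ψ hss hne
    exact le_trans (Finset.inf'_le _ (hroots j hj)) hle
  constructor <;> omega
end

section
/- Let G_N be a polar factor graph produced by removing all variable nodes in the bottom Ñ − N rows (and their edges) of G_{Ñ}, where Ñ = 2^{⌈log N⌉}. Then every nonempty stopping set of G_N contains a full row of variable nodes: there exists a row index i with 1 ≤ i ≤ N such that v_{k,i} belongs to the stopping set for every column k with 1 ≤ k ≤ ⌈log N⌉ + 1. -/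
/-- Neighbors of check node `c_{k,i}` in the graph `G_N` obtained by removing the
bottom `2^⌈log N⌉ - N` rows of variable nodes of `G_{2^⌈log N⌉}`. -/
def chkNbrsN (N k i : ℕ) : Finset (ℕ × ℕ) :=
  (chkNbrs (Nat.clog 2 N) k i).filter fun v => v.2 ≤ N

/-- `c_{k,i}` is a check node of `G_N`. -/
def IsCheckN (N k i : ℕ) : Prop := 1 ≤ k ∧ k ≤ Nat.clog 2 N ∧ 1 ≤ i ∧ i ≤ N

/-- `v_{k,i}` is a variable node of `G_N`. -/
def IsVNN (N k i : ℕ) : Prop := 1 ≤ k ∧ k ≤ Nat.clog 2 N + 1 ∧ 1 ≤ i ∧ i ≤ N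

/-- A stopping set of `G_N`. -/
def IsStoppingSetN (N : ℕ) (ψ : Finset (ℕ × ℕ)) : Prop :=
  (∀ v ∈ ψ, IsVNN N v.1 v.2) ∧
  ∀ k i, IsCheckN N k i → (∃ v ∈ chkNbrsN N k i, v ∈ ψ) →
    2 ≤ ((chkNbrsN N k i) ∩ ψ).card

/-- The leaf set of a stopping set of `G_N`. -/
def leafSetN (N : ℕ) (ψ : Finset (ℕ × ℕ)) : Finset (ℕ × ℕ) :=
  ψ.filter fun v => v.1 = Nat.clog 2 N + 1

/-- Every nonempty stopping set of the polar factor graph `G_N` (obtained by removing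
the bottom `2^⌈log N⌉ - N` rows of `G_{2^⌈log N⌉}`) contains a full row of variable
nodes: all columns `1 ≤ k ≤ ⌈log N⌉ + 1` of some single row `1 ≤ i ≤ N`. -/
theorem stoppingSet_contains_full_row (N : ℕ) (hN : 1 ≤ N)
    (ψ : Finset (ℕ × ℕ)) (hne : ψ.Nonempty) (hψ : IsStoppingSetN N ψ) :
    ∃ i, 1 ≤ i ∧ i ≤ N ∧ ∀ k, 1 ≤ k → k ≤ Nat.clog 2 N + 1 → (k, i) ∈ ψ := by
  obtain ⟨hvn, hchk⟩ := hψ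
  set n := Nat.clog 2 N with hn
  have hne' : (ψ.image Prod.snd).Nonempty := hne.image _
  set i := (ψ.image Prod.snd).max' hne' with hidef
  have hmax : ∀ v ∈ ψ, v.2 ≤ i := fun v hv =>
    Finset.le_max' _ _ (Finset.mem_image_of_mem _ hv)
  obtain ⟨v0, hv0, hv0i⟩ := Finset.mem_image.mp ((ψ.image Prod.snd).max'_mem hne')
  rw [← hidef] at hv0i
  have hki0 : (v0.1, i) ∈ ψ := by
    have : (v0.1, i) = v0 := by rw [← hv0i]
    rw [this]; exact hv0
  obtain ⟨hk01, hk02, hi1', hiN'⟩ := hvn v0 hv0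
  have hi1 : 1 ≤ i := hv0i ▸ hi1'
  have hiN : i ≤ N := hv0i ▸ hiN'
  -- key step: for a check c_{k,i} on the maximal row, both horizontal
  -- neighbors are in ψ as soon as one of them is.
  have key : ∀ k, 1 ≤ k → k ≤ n → ((k, i) ∈ ψ ∨ (k + 1, i) ∈ ψ) →
      (k, i) ∈ ψ ∧ (k + 1, i) ∈ ψ := by
    intro k hk1 hkn hor
    have hc : IsCheckN N k i := ⟨hk1, hkn, hi1, hiN⟩
    have hmem1 : ((k, i) : ℕ × ℕ) ∈ chkNbrsN N k i := by
      unfold chkNbrsN chkNbrs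
      split_ifs <;> simp [hiN, ← hn]
    have hmem2 : ((k + 1, i) : ℕ × ℕ) ∈ chkNbrsN N k i := by
      unfold chkNbrsN chkNbrs
      split_ifs <;> simp [hiN, ← hn]
    have hadj : ∃ v ∈ chkNbrsN N k i, v ∈ ψ := by
      rcases hor with h | h
      · exact ⟨(k, i), hmem1, h⟩
      · exact ⟨(k + 1, i), hmem2, h⟩
    have hcard := hchk k i hc hadj
    have hsl : ((k + 1, i + 2 ^ (n - k)) : ℕ × ℕ) ∉ ψ := by
      intro h
      have h1 := hmax _ h
      have h2 : 1 ≤ 2 ^ (n - k) := Nat.one_le_two_pow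
      simp only at h1
      omega
    have hsub : chkNbrsN N k i ∩ ψ ⊆ {(k, i), (k + 1, i)} := by
      intro v hv
      obtain ⟨hv1, hv2⟩ := Finset.mem_inter.mp hv
      have hv1' : v ∈ chkNbrs n k i := by
        have := Finset.mem_filter.mp hv1
        rw [← hn] at this
        exact this.1
      unfold chkNbrs at hv1'
      split_ifs at hv1' <;> simp only [Finset.mem_insert, Finset.mem_singleton] at hv1' ⊢
      · rcases hv1' with h | h | h
        · exact Or.inl h
        · exact Or.inr h
        · exact absurd (h ▸ hv2) hsl
      · exact hv1'
    have hpair : (({(k, i), (k + 1, i)} : Finset (ℕ × ℕ))).card = 2 := by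
      rw [Finset.card_pair]
      simp only [ne_eq, Prod.mk.injEq, not_and]
      omega
    have heq : chkNbrsN N k i ∩ ψ = {(k, i), (k + 1, i)} := by
      apply Finset.eq_of_subset_of_card_le hsub
      omega
    constructor
    · have : ((k, i) : ℕ × ℕ) ∈ chkNbrsN N k i ∩ ψ := by
        rw [heq]; simp
      exact (Finset.mem_inter.mp this).2
    · have : ((k + 1, i) : ℕ × ℕ) ∈ chkNbrsN N k i ∩ ψ := by
        rw [heq]; simp
      exact (Finset.mem_inter.mp this).2
  -- go down to column 1
  have down : ∀ k, k ≤ n → (k + 1, i) ∈ ψ → (1, i) ∈ ψ := by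
    intro k
    induction k with
    | zero => intro _ h; exact h
    | succ m ih =>
      intro hkn h
      have := (key (m + 1) (by omega) (by omega) (Or.inr h)).1
      exact ih (by omega) this
  have h1i : (1, i) ∈ ψ := by
    obtain ⟨m, hm⟩ : ∃ m, v0.1 = m + 1 := ⟨v0.1 - 1, by omega⟩
    have hmn : m ≤ n := by omega
    exact down m hmn (hm ▸ hki0)
  -- go up to column n+1
  have up : ∀ k, k ≤ n → (k + 1, i) ∈ ψ := by
    intro k
    induction k with
    | zero => intro _; exact h1i
    | succ m ih =>
      intro hkn
      have hm : (m + 1, i) ∈ ψ := ih (by omega)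
      exact (key (m + 1) (by omega) (by omega) (Or.inl hm)).2
  refine ⟨i, hi1, hiN, ?_⟩
  intro k hk1 hk2
  obtain ⟨m, hm⟩ : ∃ m, k = m + 1 := ⟨k - 1, by omega⟩
  subst hm
  exact up m (by omega)
end

section
/- Systematic encoding of a polar code via a peeling decoder always succeeds: if the variable nodes {v_{(n+1),i} : i ∈ A} (rightmost column, information indices) and {v_{1,i} : i ∈ F} (leftmost column, frozen indices) are initialized, where A and F partition [N], then the set of uninitialized variable nodes contains no stopping set of the factor graph G_N, so the peeling decoder determines all variable nodes. -/
/-- Reparametrized check neighborhoods: `nb t k i = chkNbrs n k i` when `t = n+1`. -/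
private def nb (t k i : ℕ) : Finset (ℕ × ℕ) :=
  if (i - 1) % 2 ^ (t - k) < 2 ^ (t - k - 1) then
    {(k, i), (k + 1, i), (k + 1, i + 2 ^ (t - k - 1))}
  else
    {(k, i), (k + 1, i)}

private lemma mem_nb_left (t k i : ℕ) : (k, i) ∈ nb t k i := by
  unfold nb; split <;> simp

private lemma mem_nb_right (t k i : ℕ) : (k + 1, i) ∈ nb t k i := by
  unfold nb; split <;> simp

private lemma nb_spec {t k i : ℕ} {v : ℕ × ℕ} (h : v ∈ nb t k i) :
    v = (k, i) ∨ v = (k + 1, i) ∨ v = (k + 1, i + 2 ^ (t - k - 1)) := by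
  unfold nb at h
  split at h
  · simpa using h
  · simp only [Finset.mem_insert, Finset.mem_singleton] at h
    tauto

private lemma half_step {e a i : ℕ} (he : 1 ≤ e) (hdvd : 2 ^ e ∣ a)
    (hi1 : 1 ≤ i) (hia : i ≤ a) (hm : (i - 1) % 2 ^ e < 2 ^ (e - 1)) :
    i + 2 ^ (e - 1) ≤ a := by
  obtain ⟨c, rfl⟩ := hdvd
  have hq := Nat.div_add_mod (i - 1) (2 ^ e)
  have hq' : 2 ^ e * ((i - 1) / 2 ^ e) + (i - 1) % 2 ^ e + 1 = i := by
    rw [hq]; omega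
  have h2 : 2 ^ (e - 1) + 2 ^ (e - 1) = 2 ^ e := by
    rw [← two_mul, ← pow_succ']
    congr 1
    omega
  have h3 : 2 ^ e * ((i - 1) / 2 ^ e) < 2 ^ e * c := by
    have h0 : (0:ℕ) ≤ (i - 1) % 2 ^ e := Nat.zero_le _
    linarith
  have hqc : (i - 1) / 2 ^ e < c := Nat.lt_of_mul_lt_mul_left h3
  have hmul : 2 ^ e * ((i - 1) / 2 ^ e) + 2 ^ e ≤ 2 ^ e * c := by
    have := Nat.mul_le_mul_left (2 ^ e) (show (i - 1) / 2 ^ e + 1 ≤ c by omega)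
    rw [Nat.mul_add, Nat.mul_one] at this
    exact this
  linarith [hm]

private lemma nb_row_le {t k i a : ℕ} (he : 1 ≤ t - k) (hdvd : 2 ^ (t - k) ∣ a)
    (hi1 : 1 ≤ i) (hia : i ≤ a) : ∀ v ∈ nb t k i, v.2 ≤ a := by
  intro v hv
  unfold nb at hv
  split at hv
  · rename_i hm
    have hs := half_step he hdvd hi1 hia hm
    simp only [Finset.mem_insert, Finset.mem_singleton] at hv
    rcases hv with rfl | rfl | rfl <;> simp <;> omega
  · simp only [Finset.mem_insert, Finset.mem_singleton] at hv
    rcases hv with rfl | rfl <;> simpa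

private lemma mod_shift {M r d : ℕ} (hdvd : M ∣ r) (hd : d < M) : (r + d) % M = d := by
  obtain ⟨q, rfl⟩ := hdvd
  rw [Nat.mul_add_mod, Nat.mod_eq_of_lt hd]

private lemma full_row (m : ℕ) : ∀ (s r N : ℕ) (ψ : Finset (ℕ × ℕ)),
    1 ≤ N → N ≤ 2 ^ m → 2 ^ m ∣ r →
    (∀ v ∈ ψ, s ≤ v.1 ∧ v.1 ≤ s + m ∧ r + 1 ≤ v.2 ∧ v.2 ≤ r + N) →
    (∀ k i, s ≤ k → k + 1 ≤ s + m → r + 1 ≤ i → i ≤ r + N →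
      (∃ v ∈ (nb (s + m) k i).filter (fun v => v.2 ≤ r + N), v ∈ ψ) →
      2 ≤ (((nb (s + m) k i).filter (fun v => v.2 ≤ r + N)) ∩ ψ).card) →
    ψ.Nonempty →
    ∃ j, r + 1 ≤ j ∧ j ≤ r + N ∧ ∀ k, s ≤ k → k ≤ s + m → (k, j) ∈ ψ := by
  induction m with
  | zero =>
    intro s r N ψ hN1 hN2 _ hnodes _ hne
    obtain ⟨⟨a, b⟩, hv⟩ := hne
    obtain ⟨h1, h2, h3, h4⟩ := hnodes _ hv
    refine ⟨r + 1, le_refl _, by omega, fun k hk1 hk2 => ?_⟩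
    simp only at h1 h2 h3 h4
    have hk : k = a := by omega
    have hb : r + 1 = b := by omega
    rw [hk, hb]; exact hv
  | succ m ih =>
    intro s r N ψ hN1 hN2 hdvd hnodes hchk hne
    have hpow : (1:ℕ) ≤ 2 ^ m := Nat.one_le_two_pow
    have hpow2 : (2:ℕ) ^ (m + 1) = 2 ^ m + 2 ^ m := by rw [pow_succ]; ring
    have hdvd' : 2 ^ m ∣ r := dvd_trans (pow_dvd_pow 2 (by omega)) hdvd
    have hst : s + 1 + m = s + (m + 1) := by omega
    by_cases hright : ∃ v ∈ ψ, s + 1 ≤ v.1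
    · by_cases hbot : ∃ v ∈ ψ, s + 1 ≤ v.1 ∧ r + 2 ^ m + 1 ≤ v.2
      · -- bottom half is inhabited
        obtain ⟨w, hwψ, hw1, hw2⟩ := hbot
        have hwn := hnodes w hwψ
        have hNH : 2 ^ m + 1 ≤ N := by omega
        set ψ' := ψ.filter (fun v => s + 1 ≤ v.1 ∧ r + 2 ^ m + 1 ≤ v.2) with hψ'def
        have hsub : ψ' ⊆ ψ := Finset.filter_subset _ _
        have hrN : r + 2 ^ m + (N - 2 ^ m) = r + N := by omega
        have hdvd2 : 2 ^ m ∣ r + 2 ^ m := dvd_add hdvd' dvd_rfl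
        have hkey : ∀ k i, s + 1 ≤ k → r + 2 ^ m + 1 ≤ i →
            ((nb (s + (m + 1)) k i).filter (fun v => v.2 ≤ r + N)) ∩ ψ
            = ((nb (s + (m + 1)) k i).filter (fun v => v.2 ≤ r + N)) ∩ ψ' := by
          intro k i hk hi
          have h1p : (1:ℕ) ≤ 2 ^ (s + (m + 1) - k - 1) := Nat.one_le_two_pow
          apply Finset.Subset.antisymm
          · intro u hu
            rw [Finset.mem_inter] at hu ⊢
            refine ⟨hu.1, Finset.mem_filter.mpr ⟨hu.2, ?_, ?_⟩⟩
            · rcases nb_spec (Finset.mem_filter.mp hu.1).1 with rfl | rfl | rfl <;>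
                simp <;> omega
            · rcases nb_spec (Finset.mem_filter.mp hu.1).1 with rfl | rfl | rfl <;>
                simp <;> omega
          · exact Finset.inter_subset_inter (Finset.Subset.refl _) hsub
        obtain ⟨j, hj1, hj2, hjall⟩ :=
          ih (s + 1) (r + 2 ^ m) (N - 2 ^ m) ψ' (by omega) (by omega) hdvd2
            (by
              intro v hv
              have h1 := hnodes v (hsub hv)
              have h2 := (Finset.mem_filter.mp hv).2
              omega)
            (by
              intro k i hk hk2 hi1 hi2 hex
              rw [hst, hrN] at hex ⊢
              obtain ⟨u, hu1, hu2⟩ := hex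
              have := hchk k i (by omega) (by omega) (by omega) (by omega)
                ⟨u, hu1, hsub hu2⟩
              rwa [hkey k i hk hi1] at this)
            ⟨w, Finset.mem_filter.mpr ⟨hwψ, hw1, hw2⟩⟩
        rw [hst] at hjall
        rw [hrN] at hj2
        have hj3 : (s + 1, j) ∈ ψ := hsub (hjall (s + 1) le_rfl (by omega))
        have hwit : (s + 1, j) ∈ (nb (s + (m + 1)) s j).filter (fun v => v.2 ≤ r + N) :=
          Finset.mem_filter.mpr ⟨mem_nb_right _ _ _, by show j ≤ r + N; omega⟩
        have hcard := hchk s j le_rfl (by omega) (by omega) (by omega) ⟨_, hwit, hj3⟩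
        have hmod : ¬ ((j - 1) % 2 ^ (m + 1) < 2 ^ m) := by
          have hj : j - 1 = r + (j - 1 - r) := by omega
          rw [hj, mod_shift hdvd (by omega)]
          omega
        have hnb : nb (s + (m + 1)) s j = {(s, j), (s + 1, j)} := by
          unfold nb
          rw [show s + (m + 1) - s = m + 1 by omega, show m + 1 - 1 = m by omega,
            if_neg hmod]
        have hsj : (s, j) ∈ ψ := by
          by_contra hno
          have hsubs : ((nb (s + (m + 1)) s j).filter (fun v => v.2 ≤ r + N)) ∩ ψ
              ⊆ {(s + 1, j)} := by
            intro u hu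
            rw [Finset.mem_inter, Finset.mem_filter, hnb] at hu
            obtain ⟨⟨hu1, _⟩, hu2⟩ := hu
            simp only [Finset.mem_insert, Finset.mem_singleton] at hu1 ⊢
            rcases hu1 with rfl | rfl
            · exact absurd hu2 hno
            · rfl
          have := Finset.card_le_card hsubs
          simp only [Finset.card_singleton] at this
          omega
        refine ⟨j, by omega, by omega, fun k hk1 hk2 => ?_⟩
        rcases eq_or_lt_of_le hk1 with rfl | hk
        · exact hsj
        · exact hsub (hjall k (by omega) (by omega))
      · -- only the top half is inhabited (to the right of column s)
        push_neg at hbot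
        obtain ⟨w, hwψ, hw1⟩ := hright
        set N' := min N (2 ^ m) with hN'def
        set ψ' := ψ.filter (fun v => s + 1 ≤ v.1) with hψ'def
        have hsub : ψ' ⊆ ψ := Finset.filter_subset _ _
        have hrowle : ∀ k i, s + 1 ≤ k → k + 1 ≤ s + (m + 1) → r + 1 ≤ i → i ≤ r + N' →
            ∀ u ∈ nb (s + (m + 1)) k i, u.2 ≤ r + 2 ^ m := by
          intro k i hk hk2 hi1 hi2
          have he : 1 ≤ s + (m + 1) - k := by omega
          have hdd : 2 ^ (s + (m + 1) - k) ∣ r + 2 ^ m := by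
            have h1 : 2 ^ (s + (m + 1) - k) ∣ 2 ^ m := pow_dvd_pow 2 (by omega)
            exact dvd_add (dvd_trans h1 hdvd') h1
          exact nb_row_le he hdd (by omega) (by omega)
        have hfeq : ∀ k i, s + 1 ≤ k → k + 1 ≤ s + (m + 1) → r + 1 ≤ i → i ≤ r + N' →
            (nb (s + (m + 1)) k i).filter (fun v => v.2 ≤ r + N')
            = (nb (s + (m + 1)) k i).filter (fun v => v.2 ≤ r + N) := by
          intro k i hk hk2 hi1 hi2
          apply Finset.filter_congr
          intro u hu
          have := hrowle k i hk hk2 hi1 hi2 u hu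
          omega
        have hkey : ∀ k i, s + 1 ≤ k →
            ((nb (s + (m + 1)) k i).filter (fun v => v.2 ≤ r + N)) ∩ ψ
            = ((nb (s + (m + 1)) k i).filter (fun v => v.2 ≤ r + N)) ∩ ψ' := by
          intro k i hk
          apply Finset.Subset.antisymm
          · intro u hu
            rw [Finset.mem_inter] at hu ⊢
            refine ⟨hu.1, Finset.mem_filter.mpr ⟨hu.2, ?_⟩⟩
            rcases nb_spec (Finset.mem_filter.mp hu.1).1 with rfl | rfl | rfl <;>
              simp <;> omega
          · exact Finset.inter_subset_inter (Finset.Subset.refl _) hsub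
        obtain ⟨j, hj1, hj2, hjall⟩ :=
          ih (s + 1) r N' ψ' (by omega) (by omega) hdvd'
            (by
              intro v hv
              have h1 := hnodes v (hsub hv)
              have h2 := (Finset.mem_filter.mp hv).2
              have h3 := hbot v (hsub hv) h2
              omega)
            (by
              intro k i hk hk2 hi1 hi2 hex
              rw [hst] at hex ⊢
              rw [hfeq k i hk (by omega) hi1 hi2] at hex ⊢
              obtain ⟨u, hu1, hu2⟩ := hex
              have := hchk k i (by omega) (by omega) (by omega) (by omega)
                ⟨u, hu1, hsub hu2⟩
              rwa [hkey k i hk] at this)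
            ⟨w, Finset.mem_filter.mpr ⟨hwψ, hw1⟩⟩
        rw [hst] at hjall
        have hj3 : (s + 1, j) ∈ ψ := hsub (hjall (s + 1) le_rfl (by omega))
        have hwit : (s + 1, j) ∈ (nb (s + (m + 1)) s j).filter (fun v => v.2 ≤ r + N) :=
          Finset.mem_filter.mpr ⟨mem_nb_right _ _ _, by show j ≤ r + N; omega⟩
        have hcard := hchk s j le_rfl (by omega) (by omega) (by omega) ⟨_, hwit, hj3⟩
        have hmod : (j - 1) % 2 ^ (m + 1) < 2 ^ m := by
          have hj : j - 1 = r + (j - 1 - r) := by omega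
          rw [hj, mod_shift hdvd (by omega)]
          omega
        have hnb : nb (s + (m + 1)) s j
            = {(s, j), (s + 1, j), (s + 1, j + 2 ^ m)} := by
          unfold nb
          rw [show s + (m + 1) - s = m + 1 by omega, show m + 1 - 1 = m by omega,
            if_pos hmod]
        have hsj : (s, j) ∈ ψ := by
          by_contra hno
          have hsubs : ((nb (s + (m + 1)) s j).filter (fun v => v.2 ≤ r + N)) ∩ ψ
              ⊆ {(s + 1, j)} := by
            intro u hu
            rw [Finset.mem_inter, Finset.mem_filter, hnb] at hu
            obtain ⟨⟨hu1, _⟩, hu2⟩ := hu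
            simp only [Finset.mem_insert, Finset.mem_singleton] at hu1 ⊢
            rcases hu1 with rfl | rfl | rfl
            · exact absurd hu2 hno
            · rfl
            · exfalso
              have hcon : j + 2 ^ m < r + 2 ^ m + 1 := hbot _ hu2 (le_refl _)
              omega
          have := Finset.card_le_card hsubs
          simp only [Finset.card_singleton] at this
          omega
        refine ⟨j, by omega, by omega, fun k hk1 hk2 => ?_⟩
        rcases eq_or_lt_of_le hk1 with rfl | hk
        · exact hsj
        · exact hsub (hjall k (by omega) (by omega))
    · -- everything sits in column s : impossible
      push_neg at hright
      obtain ⟨v, hv⟩ := hne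
      obtain ⟨h1, h2, h3, h4⟩ := hnodes v hv
      have hvs : v.1 = s := by have := hright v hv; omega
      have hveq : v = (s, v.2) := by
        rw [← hvs]
      have hmem : v ∈ (nb (s + (m + 1)) s v.2).filter (fun u => u.2 ≤ r + N) := by
        rw [Finset.mem_filter]
        exact ⟨by rw [hveq]; exact mem_nb_left _ _ _, h4⟩
      have hcard := hchk s v.2 le_rfl (by omega) h3 h4 ⟨v, hmem, hv⟩
      exfalso
      have hsubs : ((nb (s + (m + 1)) s v.2).filter (fun u => u.2 ≤ r + N)) ∩ ψ
          ⊆ {v} := by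
        intro u hu
        rw [Finset.mem_inter, Finset.mem_filter] at hu
        obtain ⟨⟨hu1, _⟩, hu2⟩ := hu
        have hcol := hright u hu2
        rcases nb_spec hu1 with rfl | rfl | rfl
        · rw [Finset.mem_singleton, hveq]
        · simp only at hcol; omega
        · simp only at hcol; omega
      have := Finset.card_le_card hsubs
      simp only [Finset.card_singleton] at this
      omega

private lemma chkNbrs_eq_nb {n k : ℕ} (i : ℕ) (hk : k ≤ n) :
    chkNbrs n k i = nb (n + 1) k i := by
  unfold chkNbrs nb
  rw [show n + 1 - k = n - k + 1 by omega, show n - k + 1 - 1 = n - k by omega]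

/-- Systematic peeling encoding always succeeds: if `A` and `F` partition `[N]` and
the variable nodes `{v_{⌈log N⌉+1, i} : i ∈ A}` (rightmost column) and
`{v_{1,i} : i ∈ F}` (leftmost column) are initialized, then no nonempty stopping set
of `G_N` consists entirely of uninitialized variable nodes, i.e., every nonempty
stopping set contains an initialized node; hence the peeling decoder determines all
variable nodes. -/

theorem peeling_encoder_succeeds (N : ℕ) (hN : 1 ≤ N) (A F : Finset ℕ)
    (hA : A ⊆ Finset.Icc 1 N) (hF : F ⊆ Finset.Icc 1 N)
    (hpart : ∀ i ∈ Finset.Icc 1 N, (i ∈ A ↔ i ∉ F))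
    (ψ : Finset (ℕ × ℕ)) (hne : ψ.Nonempty) (hψ : IsStoppingSetN N ψ) :
    ∃ v ∈ ψ, (v.1 = Nat.clog 2 N + 1 ∧ v.2 ∈ A) ∨ (v.1 = 1 ∧ v.2 ∈ F) := by
  classical
  set n := Nat.clog 2 N with hn
  have hN2 : N ≤ 2 ^ n := Nat.le_pow_clog (by norm_num) N
  obtain ⟨hnodes, hchk⟩ := hψ
  obtain ⟨j, hj1, hj2, hall⟩ :=
    full_row n 1 0 N ψ hN (by simpa using hN2) (dvd_zero _)
      (by
        intro v hv
        have := hnodes v hv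
        unfold IsVNN at this
        omega)
      (by
        intro k i hk1 hk2 hi1 hi2 hex
        have hkn : k ≤ n := by omega
        have heq : (nb (1 + n) k i).filter (fun v => v.2 ≤ 0 + N) = chkNbrsN N k i := by
          unfold chkNbrsN
          rw [show (1 + n) = n + 1 by omega, ← hn, ← chkNbrs_eq_nb i hkn]
          simp
        rw [heq] at hex ⊢
        exact hchk k i ⟨hk1, hkn, by omega, by omega⟩ hex)
      hne
  have hjIcc : j ∈ Finset.Icc 1 N := by
    rw [Finset.mem_Icc]; omega
  by_cases hjF : j ∈ F
  · exact ⟨(1, j), hall 1 le_rfl (by omega), Or.inr ⟨rfl, hjF⟩⟩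
  · have hjA : j ∈ A := (hpart j hjIcc).mpr hjF
    exact ⟨(n + 1, j), hall (n + 1) (by omega) (by omega), Or.inl ⟨rfl, hjA⟩⟩
end

section
/- For a polar code of length Ñ = 2^n with frozen set F̃ and information set Â = [Ñ] \ F̃, the stopping tree ST_i rooted at v_{1,i} is itself a stopping set in Ψ^Â for every i ∈ Â; therefore min over stopping sets ψ ∈ Ψ^Â of |Leaf-Set(ψ)| ≤ min_{i ∈ Â} f_i^{Ñ}. -/
/-- For every information index `i ∈ Â = [2^n] \ F̃`, the stopping tree rooted at
`v_{1,i}` is itself a stopping set avoiding all frozen leftmost-column nodes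
(i.e., it lies in `Ψ^Â`); therefore the minimum leaf-set size over all (nonempty)
stopping sets in `Ψ^Â` is at most `min_{i ∈ Â} f_i^{2^n}`. -/
theorem min_leafSet_le_min_stoppingTree (n : ℕ) (F : Finset ℕ)
    (hF : F ⊆ Finset.Icc 1 (2 ^ n))
    (hA : (Finset.Icc 1 (2 ^ n) \ F).Nonempty)
    (st : ℕ → Finset (ℕ × ℕ))
    (hst : ∀ i ∈ Finset.Icc 1 (2 ^ n) \ F, IsStoppingTree n i (st i)) :
    (∀ i ∈ Finset.Icc 1 (2 ^ n) \ F, ∀ j ∈ F, (1, j) ∉ st i) ∧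
    sInf {m : ℕ | ∃ ψ : Finset (ℕ × ℕ), ψ.Nonempty ∧ IsStoppingSet n ψ ∧
        (∀ j, (1, j) ∈ ψ → j ∉ F) ∧ (leafSet n ψ).card = m} ≤
      (Finset.Icc 1 (2 ^ n) \ F).inf' hA fun i => (leafSet n (st i)).card := by

  have key : ∀ i ∈ Finset.Icc 1 (2 ^ n) \ F, ∀ j, (1, j) ∈ st i → j ∉ F := by
    intro i hi j hj hjF
    obtain ⟨hss, hfil⟩ := hst i hi
    have : (1, j) ∈ (st i).filter (fun v => v.1 = 1) := by
      simp [Finset.mem_filter, hj]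
    rw [hfil] at this
    simp at this
    subst this
    simp [Finset.mem_sdiff] at hi
    exact hi.2 hjF
  constructor
  · intro i hi j hjF hmem
    exact key i hi j hmem hjF
  · obtain ⟨i, hi, hmin⟩ := Finset.exists_mem_eq_inf' hA (fun i => (leafSet n (st i)).card)
    rw [hmin]
    apply Nat.sInf_le
    refine ⟨st i, ?_, (hst i hi).1, key i hi, rfl⟩
    have hfil := (hst i hi).2
    have : (1, i) ∈ (st i).filter (fun v => v.1 = 1) := by rw [hfil]; simp
    exact ⟨(1, i), (Finset.mem_filter.mp this).1⟩
end
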